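/- arXiv:2009.12930 — 8 statements merged into one kernel-verified Lean document; each statement's English description precedes it below -/
import Mathlib

section
/- Let C ∈ ℝ_max^{n×n}, U, V ∈ ℝ_max^{m×n}, b, d ∈ ℝ_max^m, p ∈ ℝ_max^n and q ∈ (ℝ ∪ {+∞})^n, and suppose every finite entry of C, U, V, b, d, p, q is an integer. Define Λ = { λ ∈ ℝ : ∃ x ∈ ℝ^n such that max_j (c_{ij} + x_j) ≤ λ + x_i for all i, p_i ≤ λ + x_i for all i, x_i ≤ λ + q_i for all i with q_i ∈ ℝ, and max( max_j (u_{ij} + x_j), b_i ) ≤ max( max_j (v_{ij} + x_j), d_i ) for all i }. If Λ is nonempty and bounded below, then λ* := inf Λ is a rational number whose denominator is at most n+1; that is, there exists an integer d with 1 ≤ d ≤ n+1 such that d·λ* ∈ ℤ. -/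
namespace Stmt12Aux

variable {ι : Type*}

/-- Edge `(u, v, c, a)`: constraint `x u ≤ x v + c + a·λ`. -/
abbrev E (ι : Type*) := ι × ι × ℤ × ℕ

variable (cs : Set (E ι))

/-- `Wk cs u l`: `l` is a list of edges of `cs` forming a walk starting at `u`. -/
def Wk : ι → List (E ι) → Prop
  | _, [] => True
  | u, e :: l => e ∈ cs ∧ e.1 = u ∧ Wk e.2.1 l

@[simp] lemma Wk_nil (u : ι) : Wk cs u [] := trivial

@[simp] lemma Wk_cons (u : ι) (e : E ι) (l : List (E ι)) :
    Wk cs u (e :: l) ↔ e ∈ cs ∧ e.1 = u ∧ Wk cs e.2.1 l := Iff.rfl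

/-- End point of a walk starting at `u` with edge list `l`. -/
def fin' (u : ι) (l : List (E ι)) : ι := l.foldl (fun _ e => e.2.1) u

@[simp] lemma fin'_nil (u : ι) : fin' u ([] : List (E ι)) = u := rfl

@[simp] lemma fin'_cons (u : ι) (e : E ι) (l : List (E ι)) :
    fin' u (e :: l) = fin' e.2.1 l := rfl

lemma fin'_append (u : ι) (l l' : List (E ι)) :
    fin' u (l ++ l') = fin' (fin' u l) l' := List.foldl_append

lemma Wk_append {u : ι} {l l' : List (E ι)} :
    Wk cs u (l ++ l') ↔ Wk cs u l ∧ Wk cs (fin' u l) l' := by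
  induction l generalizing u with
  | nil => simp
  | cons e t ih => simp [ih, and_assoc]

lemma Wk_mem {u : ι} {l : List (E ι)} (h : Wk cs u l) {e : E ι} (he : e ∈ l) : e ∈ cs := by
  induction l generalizing u with
  | nil => simp at he
  | cons f t ih =>
    rcases he with _ | he
    · exact h.1
    · exact ih h.2.2 (by assumption)

def ewt (lam : ℝ) (e : E ι) : ℝ := (e.2.2.1 : ℝ) + (e.2.2.2 : ℝ) * lam

def wwt (lam : ℝ) (l : List (E ι)) : ℝ := (l.map (ewt lam)).sum

@[simp] lemma wwt_nil (lam : ℝ) : wwt lam ([] : List (E ι)) = 0 := rfl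

@[simp] lemma wwt_cons (lam : ℝ) (e : E ι) (l : List (E ι)) :
    wwt lam (e :: l) = ewt lam e + wwt lam l := by simp [wwt]

lemma wwt_append (lam : ℝ) (l l' : List (E ι)) :
    wwt lam (l ++ l') = wwt lam l + wwt lam l' := by simp [wwt]

def slope (l : List (E ι)) : ℕ := (l.map (fun e => e.2.2.2)).sum

def cost (l : List (E ι)) : ℤ := (l.map (fun e => e.2.2.1)).sum

lemma wwt_eq (lam : ℝ) (l : List (E ι)) :
    wwt lam l = (cost l : ℝ) + (slope l : ℝ) * lam := by
  induction l with
  | nil => simp [cost, slope]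
  | cons e t ih =>
    simp only [wwt_cons, cost, slope, List.map_cons, List.sum_cons, ewt, ih]
    push_cast; ring

lemma slope_le_length {l : List (E ι)} (h : ∀ e ∈ l, e.2.2.2 ≤ 1) : slope l ≤ l.length := by
  induction l with
  | nil => simp [slope]
  | cons e t ih =>
    simp only [slope, List.map_cons, List.sum_cons, List.length_cons]
    have h1 := h e (by simp)
    have h2 := ih (fun f hf => h f (by simp [hf]))
    simp only [slope] at h2; omega

/-- Splitting a walk at a repeated vertex. -/
lemma split {u : ι} {l : List (E ι)} (hl : Wk cs u l) {i j : ℕ} (hij : i < j)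
    (hjl : j ≤ l.length) (hf : fin' u (l.take i) = fin' u (l.take j)) :
    Wk cs u (l.take i ++ l.drop j) ∧
    fin' u (l.take i ++ l.drop j) = fin' u l ∧
    (l.take i ++ l.drop j).length = l.length - (j - i) ∧
    Wk cs (fin' u (l.take i)) ((l.drop i).take (j - i)) ∧
    fin' (fin' u (l.take i)) ((l.drop i).take (j - i)) = fin' u (l.take i) ∧
    ((l.drop i).take (j - i)).length = j - i ∧
    ∀ lam, wwt lam l = wwt lam (l.take i ++ l.drop j) + wwt lam ((l.drop i).take (j - i)) := by
  have htj : l.take j = l.take i ++ (l.drop i).take (j - i) := by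
    rw [← List.take_add]; congr 1; omega
  have hl2 : l = l.take j ++ l.drop j := (List.take_append_drop j l).symm
  have hwj : Wk cs u (l.take j) ∧ Wk cs (fin' u (l.take j)) (l.drop j) := by
    rw [← Wk_append]; exact (hl2 ▸ hl)
  have hwi : Wk cs u (l.take i) ∧ Wk cs (fin' u (l.take i)) ((l.drop i).take (j - i)) := by
    rw [← Wk_append, ← htj]; exact hwj.1
  have hfj : fin' u (l.take j) = fin' (fin' u (l.take i)) ((l.drop i).take (j - i)) := by
    rw [htj, fin'_append]
  refine ⟨?_, ?_, ?_, hwi.2, ?_, ?_, ?_⟩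
  · rw [Wk_append]
    exact ⟨hwi.1, by rw [hf]; exact hwj.2⟩
  · rw [fin'_append, hf, ← fin'_append, ← hl2]
  · rw [List.length_append, List.length_take, List.length_drop]; omega
  · rw [← hfj, ← hf]
  · rw [List.length_take, List.length_drop]; omega
  · intro lam
    conv_lhs => rw [hl2, htj]
    rw [wwt_append, wwt_append, wwt_append]; ring

lemma exists_repeat [Fintype ι] (u : ι) {l : List (E ι)} {K : ℕ}
    (hK : Fintype.card ι < K) (hKl : K ≤ l.length + 1) :
    ∃ i j, i < j ∧ j < K ∧ fin' u (l.take i) = fin' u (l.take j) := by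
  have : ∃ a b : Fin K, a ≠ b ∧ fin' u (l.take a) = fin' u (l.take b) := by
    obtain ⟨a, b, hne, heq⟩ := Fintype.exists_ne_map_eq_of_card_lt
      (fun k : Fin K => fin' u (l.take k)) (by simpa using hK)
    exact ⟨a, b, hne, heq⟩
  obtain ⟨a, b, hne, heq⟩ := this
  rcases lt_or_gt_of_ne (fun h : (a : ℕ) = (b : ℕ) => hne (Fin.ext h)) with h | h
  · exact ⟨a, b, h, b.2, heq⟩
  · exact ⟨b, a, h, a.2, heq.symm⟩

/-- All closed walks have nonnegative weight if the short ones do. -/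
lemma cycles_nonneg [Fintype ι] {lam : ℝ}
    (h : ∀ u l, Wk cs u l → fin' u l = u → l.length ≤ Fintype.card ι → 0 ≤ wwt lam l) :
    ∀ u (l : List (E ι)), Wk cs u l → fin' u l = u → 0 ≤ wwt lam l := by
  have main : ∀ N u (l : List (E ι)), l.length ≤ N → Wk cs u l → fin' u l = u →
      0 ≤ wwt lam l := by
    intro N
    induction N with
    | zero =>
      intro u l hlen _ _
      rw [List.length_eq_zero_iff.1 (Nat.le_zero.1 hlen)]; simp
    | succ N ih =>
      intro u l hlen hw hc
      by_cases hshort : l.length ≤ Fintype.card ι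
      · exact h u l hw hc hshort
      · push_neg at hshort
        obtain ⟨i, j, hij, hjK, hrep⟩ := exists_repeat (l := l) u (K := l.length) hshort (Nat.le_succ _)
        have hjle : j ≤ l.length := le_of_lt hjK
        obtain ⟨hw1, hf1, hlen1, hw2, hf2, hlen2, hsum⟩ := split cs hw hij hjle hrep
        have hlt1 : (l.take i ++ l.drop j).length ≤ N := by omega
        have h1 : 0 ≤ wwt lam (l.take i ++ l.drop j) :=
          ih u (l.take i ++ l.drop j) hlt1 hw1 (by rw [hf1, hc])
        have hlt2 : ((l.drop i).take (j - i)).length ≤ N := by omega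
        have h2 : 0 ≤ wwt lam ((l.drop i).take (j - i)) :=
          ih (fin' u (l.take i)) ((l.drop i).take (j - i)) hlt2 hw2 hf2
        rw [hsum lam]; linarith
  exact fun u l => main l.length u l le_rfl

def Feasible (lam : ℝ) : Prop := ∃ x : ι → ℝ, ∀ e ∈ cs, x e.1 ≤ x e.2.1 + ewt lam e

lemma telescope {x : ι → ℝ} {lam : ℝ} (hx : ∀ e ∈ cs, x e.1 ≤ x e.2.1 + ewt lam e) :
    ∀ (l : List (E ι)) (u : ι), Wk cs u l → x u ≤ x (fin' u l) + wwt lam l := by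
  intro l
  induction l with
  | nil => intro u _; simp
  | cons e t ih =>
    intro u hw
    have h1 := hx e hw.1
    have h2 := ih e.2.1 hw.2.2
    simp only [fin'_cons, wwt_cons]
    rw [← hw.2.1]
    linarith

lemma closed_nonneg_of_feasible {lam : ℝ} (hf : Feasible cs lam) {u : ι} {l : List (E ι)}
    (hw : Wk cs u l) (hc : fin' u l = u) : 0 ≤ wwt lam l := by
  obtain ⟨x, hx⟩ := hf
  have := telescope cs hx l u hw
  rw [hc] at this; linarith

lemma walks_finite (hfin : cs.Finite) (u : ι) (N : ℕ) :
    {l : List (E ι) | Wk cs u l ∧ l.length ≤ N}.Finite := by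
  have : {l : List (E ι) | Wk cs u l ∧ l.length ≤ N} ⊆
      (List.map (Subtype.val : ↥hfin.toFinset → E ι)) ''
        {l : List ↥hfin.toFinset | l.length ≤ N} := by
    rintro l ⟨hw, hlen⟩
    refine ⟨l.pmap (fun e he => (⟨e, he⟩ : ↥hfin.toFinset))
      (fun e he => hfin.mem_toFinset.2 (Wk_mem cs hw he)), by simpa, ?_⟩
    rw [List.map_pmap]
    simp
  exact Set.Finite.subset (Set.Finite.image _ (List.finite_length_le _ N)) this

lemma feasible_of_cycles [Fintype ι] (hfin : cs.Finite) {lam : ℝ}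
    (h : ∀ u l, Wk cs u l → fin' u l = u → l.length ≤ Fintype.card ι → 0 ≤ wwt lam l) :
    Feasible cs lam := by
  classical
  set N := Fintype.card ι with hN
  have hall := cycles_nonneg cs h
  have hWfin : ∀ u : ι, ((wwt lam) '' {l | Wk cs u l ∧ l.length ≤ N}).Finite :=
    fun u => Set.Finite.image _ (walks_finite cs hfin u N)
  have hWne : ∀ u : ι, ((hWfin u).toFinset).Nonempty := by
    intro u
    refine ⟨0, ?_⟩
    rw [Set.Finite.mem_toFinset]
    exact ⟨[], ⟨trivial, by simp⟩, by simp⟩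
  set x : ι → ℝ := fun u => ((hWfin u).toFinset).min' (hWne u) with hxdef
  have hxle : ∀ (l : List (E ι)) (u : ι), Wk cs u l → x u ≤ wwt lam l := by
    have main : ∀ M (l : List (E ι)) (u : ι), l.length ≤ M → Wk cs u l → x u ≤ wwt lam l := by
      intro M
      induction M with
      | zero =>
        intro l u hlen hw
        rw [List.length_eq_zero_iff.1 (Nat.le_zero.1 hlen)]
        apply Finset.min'_le
        rw [Set.Finite.mem_toFinset]
        exact ⟨[], ⟨trivial, by simp⟩, rfl⟩
      | succ M ih =>
        intro l u hlen hw
        by_cases hshort : l.length ≤ N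
        · apply Finset.min'_le
          rw [Set.Finite.mem_toFinset]
          exact ⟨l, ⟨hw, hshort⟩, rfl⟩
        · push_neg at hshort
          obtain ⟨i, j, hij, hjK, hrep⟩ :=
            exists_repeat (l := l) u (K := l.length + 1) (by omega) le_rfl
          have hjle : j ≤ l.length := by omega
          obtain ⟨hw1, hf1, hlen1, hw2, hf2, hlen2, hsum⟩ := split cs hw hij hjle hrep
          have h2 : 0 ≤ wwt lam ((l.drop i).take (j - i)) := hall _ _ hw2 hf2
          have hlt1 : (l.take i ++ l.drop j).length ≤ M := by omega
          have h1 : x u ≤ wwt lam (l.take i ++ l.drop j) := ih (l.take i ++ l.drop j) u hlt1 hw1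
          rw [hsum lam]; linarith
    exact fun l u => main l.length l u le_rfl
  refine ⟨x, fun e he => ?_⟩
  obtain ⟨w, hwmem⟩ : ∃ w, w ∈ (hWfin e.2.1).toFinset ∧ x e.2.1 = w :=
    ⟨x e.2.1, Finset.min'_mem _ _, rfl⟩
  obtain ⟨hwmem, hxw⟩ := hwmem
  rw [Set.Finite.mem_toFinset] at hwmem
  obtain ⟨l, ⟨hwl, _⟩, hwwt⟩ := hwmem
  have : Wk cs e.1 (e :: l) := ⟨he, rfl, hwl⟩
  have hle := hxle (e :: l) e.1 this
  rw [wwt_cons, hwwt] at hle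
  rw [hxw]; linarith

def Kset [Fintype ι] : Set (ℕ × ℤ) :=
  {sc : ℕ × ℤ | ∃ (u : ι) (l : List (E ι)), Wk cs u l ∧ fin' u l = u ∧ l.length ≤ Fintype.card ι ∧
    sc = (slope l, cost l)}

lemma Kset_finite [Fintype ι] (hfin : cs.Finite) : (Kset cs).Finite := by
  have : Kset cs ⊆ ⋃ u : ι, (fun l : List (E ι) => (slope l, cost l)) ''
      {l | Wk cs u l ∧ l.length ≤ Fintype.card ι} := by
    rintro sc ⟨u, l, hw, _, hlen, rfl⟩
    exact Set.mem_iUnion.2 ⟨u, ⟨l, ⟨hw, hlen⟩, rfl⟩⟩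
  exact Set.Finite.subset
    (Set.finite_iUnion fun u => Set.Finite.image _ (walks_finite cs hfin u _)) this

lemma feasible_iff [Fintype ι] (hfin : cs.Finite) (lam : ℝ) :
    Feasible cs lam ↔ ∀ sc ∈ Kset cs, 0 ≤ (sc.2 : ℝ) + (sc.1 : ℝ) * lam := by
  constructor
  · rintro hf sc ⟨u, l, hw, hc, _, rfl⟩
    have := closed_nonneg_of_feasible cs hf hw hc
    rwa [wwt_eq] at this
  · intro h
    apply feasible_of_cycles cs hfin
    intro u l hw hc hlen
    have := h (slope l, cost l) ⟨u, l, hw, hc, hlen, rfl⟩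
    rwa [wwt_eq]

lemma kset_slope_le [Fintype ι] (hsl : ∀ e ∈ cs, e.2.2.2 ≤ 1) {sc : ℕ × ℤ}
    (hsc : sc ∈ Kset cs) : sc.1 ≤ Fintype.card ι := by
  obtain ⟨u, l, hw, _, hlen, rfl⟩ := hsc
  exact le_trans (slope_le_length (fun e he => hsl e (Wk_mem cs hw he))) hlen

lemma trichotomy [Fintype ι] (hfin : cs.Finite) (hsl : ∀ e ∈ cs, e.2.2.2 ≤ 1) :
    {lam : ℝ | Feasible cs lam} = ∅ ∨ ¬ BddBelow {lam : ℝ | Feasible cs lam} ∨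
    ∃ (a : ℕ) (c : ℤ), 1 ≤ a ∧ a ≤ Fintype.card ι ∧
      {lam : ℝ | Feasible cs lam} = Set.Ici (-(c : ℝ) / (a : ℝ)) := by
  classical
  by_cases hE : {lam : ℝ | Feasible cs lam} = ∅
  · exact Or.inl hE
  obtain ⟨lam0, hlam0⟩ := Set.nonempty_iff_ne_empty.2 hE
  have hK0 : ∀ sc ∈ Kset cs, sc.1 = 0 → (0 : ℝ) ≤ sc.2 := by
    intro sc hsc h0
    have := (feasible_iff cs hfin lam0).1 hlam0 sc hsc
    rw [h0] at this; push_cast at this; linarith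
  by_cases h1 : ∃ sc ∈ Kset cs, 1 ≤ sc.1
  · right; right
    have hK1fin : {sc ∈ Kset cs | 1 ≤ sc.1}.Finite := (Kset_finite cs hfin).subset (fun sc h => h.1)
    set F : Finset (ℕ × ℤ) := hK1fin.toFinset with hF
    have hFne : F.Nonempty := by
      obtain ⟨sc, hsc, h1sc⟩ := h1
      exact ⟨sc, by rw [hF, Set.Finite.mem_toFinset]; exact ⟨hsc, h1sc⟩⟩
    set G : Finset ℝ := F.image (fun sc => -(sc.2 : ℝ) / (sc.1 : ℝ)) with hG
    have hGne : G.Nonempty := hFne.image _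
    set r : ℝ := G.max' hGne with hr
    obtain ⟨sc0, hsc0F, hsc0r⟩ : ∃ sc0 ∈ F, -(sc0.2 : ℝ) / (sc0.1 : ℝ) = r := by
      obtain ⟨y, hy, hyr⟩ := Finset.mem_image.1 (G.max'_mem hGne)
      exact ⟨y, hy, hyr⟩
    have hsc0K : sc0 ∈ Kset cs ∧ 1 ≤ sc0.1 := by
      rw [hF, Set.Finite.mem_toFinset] at hsc0F; exact hsc0F
    refine ⟨sc0.1, sc0.2, hsc0K.2, kset_slope_le cs hsl hsc0K.1, ?_⟩
    rw [hsc0r]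
    ext lam
    simp only [Set.mem_setOf_eq, Set.mem_Ici, feasible_iff cs hfin]
    constructor
    · intro h
      apply G.max'_le
      intro y hy
      obtain ⟨sc, hscF, rfl⟩ := Finset.mem_image.1 hy
      rw [hF, Set.Finite.mem_toFinset] at hscF
      have hsc := h sc hscF.1
      have ha : (0 : ℝ) < (sc.1 : ℝ) := by exact_mod_cast hscF.2
      rw [div_le_iff₀ ha]; nlinarith
    · intro hlam sc hsc
      rcases Nat.eq_zero_or_pos sc.1 with h0 | hpos
      · have := hK0 sc hsc h0
        rw [h0]; push_cast; linarith
      · have hmemF : sc ∈ F := by rw [hF, Set.Finite.mem_toFinset]; exact ⟨hsc, hpos⟩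
        have hle : -(sc.2 : ℝ) / (sc.1 : ℝ) ≤ lam :=
          le_trans (G.le_max' _ (Finset.mem_image_of_mem _ hmemF)) hlam
        have ha : (0 : ℝ) < (sc.1 : ℝ) := by exact_mod_cast hpos
        rw [div_le_iff₀ ha] at hle; nlinarith
  · right; left
    push_neg at h1
    have huniv : {lam : ℝ | Feasible cs lam} = Set.univ := by
      ext lam
      simp only [Set.mem_setOf_eq, Set.mem_univ, iff_true]
      rw [feasible_iff cs hfin]
      intro sc hsc
      have h0 : sc.1 = 0 := by have := h1 sc hsc; omega
      have := hK0 sc hsc h0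
      rw [h0]; push_cast; linarith
    rw [huniv]
    exact not_bddBelow_univ


lemma feasible_def {ι : Type*} (cs : Set (E ι)) (lam : ℝ) :
    Feasible cs lam ↔ ∃ x : ι → ℝ, ∀ e ∈ cs,
      x e.1 ≤ x e.2.1 + ((e.2.2.1 : ℝ) + (e.2.2.2 : ℝ) * lam) := Iff.rfl

section Concrete

variable {m n : ℕ} (C : Fin n → Fin n → EReal) (U V : Fin m → Fin n → EReal)
  (b d : Fin m → EReal) (p q : Fin n → EReal)
  (Cz : Fin n → Fin n → ℤ) (Uz Vz : Fin m → Fin n → ℤ) (bz dz : Fin m → ℤ)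
  (pz qz : Fin n → ℤ)

def LValid (i : Fin m) : Option (Fin n) → Prop
  | some j => U i j ≠ ⊥
  | none => b i ≠ ⊥

def RValid (i : Fin m) : Option (Fin n) → Prop
  | some l => V i l ≠ ⊥
  | none => d i ≠ ⊥

def lval (i : Fin m) : Option (Fin n) → ℤ
  | some j => Uz i j
  | none => bz i

def rval (i : Fin m) : Option (Fin n) → ℤ
  | some l => Vz i l
  | none => dz i

open Classical in
noncomputable def edge4 (i : Fin m) (t c : Option (Fin n)) : E (Option (Fin n)) :=
  if RValid V d i c then (t, c, rval Vz dz i c - lval Uz bz i t, 0) else (none, none, -1, 0)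

def csσ (σ : Fin m → Option (Fin n) → Option (Fin n)) : Set (E (Option (Fin n))) :=
  {e | (∃ i j, C i j ≠ ⊥ ∧ e = (some j, some i, -(Cz i j), 1)) ∨
       (∃ i, p i ≠ ⊥ ∧ e = (none, some i, -(pz i), 1)) ∨
       (∃ i, q i ≠ ⊤ ∧ e = (some i, none, qz i, 1)) ∨
       (∃ i t, LValid U b i t ∧ e = edge4 V d Uz Vz bz dz i t (σ i t))}

lemma csσ_finite (σ : Fin m → Option (Fin n) → Option (Fin n)) :
    (csσ C U V b d p q Cz Uz Vz bz dz pz qz σ).Finite := by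
  have h : csσ C U V b d p q Cz Uz Vz bz dz pz qz σ ⊆
      Set.range (fun ij : Fin n × Fin n => ((some ij.2, some ij.1, -(Cz ij.1 ij.2), 1) : E (Option (Fin n)))) ∪
      Set.range (fun i : Fin n => ((none, some i, -(pz i), 1) : E (Option (Fin n)))) ∪
      Set.range (fun i : Fin n => ((some i, none, qz i, 1) : E (Option (Fin n)))) ∪
      Set.range (fun it : Fin m × Option (Fin n) => edge4 V d Uz Vz bz dz it.1 it.2 (σ it.1 it.2)) := by
    rintro e (⟨i, j, _, rfl⟩ | ⟨i, _, rfl⟩ | ⟨i, _, rfl⟩ | ⟨i, t, _, rfl⟩)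
    · exact Or.inl (Or.inl (Or.inl ⟨(i, j), rfl⟩))
    · exact Or.inl (Or.inl (Or.inr ⟨i, rfl⟩))
    · exact Or.inl (Or.inr ⟨i, rfl⟩)
    · exact Or.inr ⟨(i, t), rfl⟩
  exact Set.Finite.subset ((((Set.finite_range _).union (Set.finite_range _)).union
    (Set.finite_range _)).union (Set.finite_range _)) h

lemma csσ_slope (σ : Fin m → Option (Fin n) → Option (Fin n)) :
    ∀ e ∈ csσ C U V b d p q Cz Uz Vz bz dz pz qz σ, e.2.2.2 ≤ 1 := by
  rintro e (⟨i, j, _, rfl⟩ | ⟨i, _, rfl⟩ | ⟨i, _, rfl⟩ | ⟨i, t, _, rfl⟩)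
  · exact le_refl 1
  · exact le_refl 1
  · exact le_refl 1
  · unfold edge4
    split <;> simp

lemma ecoe_add_le {a b c d : ℝ} :
    (a : EReal) + (b : EReal) ≤ (c : EReal) + (d : EReal) ↔ a + b ≤ c + d := by
  rw [← EReal.coe_add, ← EReal.coe_add, EReal.coe_le_coe_iff]

lemma le_sup_isup {k : ℕ} (f : Fin k → EReal) (dd : EReal) (a : ℝ) :
    (a : EReal) ≤ (⨆ l, f l) ⊔ dd ↔ (∃ l, (a : EReal) ≤ f l) ∨ ((a : EReal) ≤ dd) := by
  constructor
  · intro h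
    rcases le_sup_iff.1 h with h | h
    · left
      cases isEmpty_or_nonempty (Fin k) with
      | inl he =>
        rw [iSup_of_empty] at h
        exact absurd (le_bot_iff.1 h) (EReal.coe_ne_bot a)
      | inr hne =>
        obtain ⟨l, hl⟩ := exists_eq_ciSup_of_finite (f := f)
        exact ⟨l, hl ▸ h⟩
    · exact Or.inr h
  · rintro (⟨l, hl⟩ | h)
    · exact le_sup_of_le_left (le_trans hl (le_iSup f l))
    · exact le_sup_of_le_right h


lemma coe2 (a bb : ℝ) : (a : EReal) + (bb : EReal) = ((a + bb : ℝ) : EReal) :=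
  (EReal.coe_add _ _).symm

lemma mem_to_sigma (lam : ℝ) (x : Fin n → ℝ)
    (hU : ∀ i j, U i j ≠ ⊤) (hV : ∀ i j, V i j ≠ ⊤)
    (hb : ∀ i, b i ≠ ⊤) (hd : ∀ i, d i ≠ ⊤)
    (hCz : ∀ i j, C i j ≠ ⊥ → C i j = ((Cz i j : ℝ) : EReal))
    (hUz : ∀ i j, U i j ≠ ⊥ → U i j = ((Uz i j : ℝ) : EReal))
    (hVz : ∀ i j, V i j ≠ ⊥ → V i j = ((Vz i j : ℝ) : EReal))
    (hbz : ∀ i, b i ≠ ⊥ → b i = ((bz i : ℝ) : EReal))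
    (hdz : ∀ i, d i ≠ ⊥ → d i = ((dz i : ℝ) : EReal))
    (hpz : ∀ i, p i ≠ ⊥ → p i = ((pz i : ℝ) : EReal))
    (hqz : ∀ i, q i ≠ ⊤ → q i = ((qz i : ℝ) : EReal))
    (h1 : ∀ i, (⨆ j, C i j + (x j : EReal)) ≤ (lam : EReal) + (x i : EReal))
    (h2 : ∀ i, p i ≤ (lam : EReal) + (x i : EReal))
    (h3 : ∀ i, q i ≠ ⊤ → (x i : EReal) ≤ (lam : EReal) + q i)
    (h4 : ∀ i, ((⨆ j, U i j + (x j : EReal)) ⊔ b i) ≤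
          ((⨆ j, V i j + (x j : EReal)) ⊔ d i)) :
    ∃ σ : Fin m → Option (Fin n) → Option (Fin n),
      Feasible (csσ C U V b d p q Cz Uz Vz bz dz pz qz σ) lam := by
  classical
  set y : Option (Fin n) → ℝ := fun o => o.elim 0 x with hy
  have key : ∀ (i : Fin m) (t : Option (Fin n)), LValid U b i t →
      ∃ c, RValid V d i c ∧
        y t ≤ y c + ((rval Vz dz i c : ℝ) - (lval Uz bz i t : ℝ)) := by
    intro i t ht
    have hterm : (((lval Uz bz i t : ℝ) + y t : ℝ) : EReal) ≤
        (⨆ l, V i l + (x l : EReal)) ⊔ d i := by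
      refine le_trans ?_ (h4 i)
      cases t with
      | some j =>
        have hj : U i j ≠ ⊥ := ht
        have : U i j + (x j : EReal) = (((Uz i j : ℝ) + x j : ℝ) : EReal) := by
          rw [hUz i j hj, coe2]
        refine le_sup_of_le_left (le_trans (le_of_eq ?_) (le_iSup _ j))
        rw [this]
        rfl
      | none =>
        have hj : b i ≠ ⊥ := ht
        refine le_sup_of_le_right (le_of_eq ?_)
        rw [hbz i hj]
        norm_num [hy, lval]
    rcases (le_sup_isup _ _ _).1 hterm with ⟨l, hl⟩ | hdd
    · have hVl : V i l ≠ ⊥ := fun hbot => by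
        rw [hbot] at hl
        exact absurd (le_bot_iff.1 (le_trans hl bot_le)) (by
          exact fun h => (EReal.coe_ne_bot _) (le_bot_iff.1 hl))
      refine ⟨some l, hVl, ?_⟩
      rw [hVz i l hVl, coe2, EReal.coe_le_coe_iff] at hl
      have : y (some l) = x l := rfl
      simp only [rval, lval] at *
      linarith
    · have hdb : d i ≠ ⊥ := fun hbot => by
        rw [hbot] at hdd
        exact (EReal.coe_ne_bot _) (le_bot_iff.1 hdd)
      refine ⟨none, hdb, ?_⟩
      rw [hdz i hdb, EReal.coe_le_coe_iff] at hdd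
      have : y none = 0 := rfl
      simp only [rval, lval] at *
      linarith
  set σ : Fin m → Option (Fin n) → Option (Fin n) :=
    fun i t => if h : LValid U b i t then (key i t h).choose else none with hσ
  refine ⟨σ, (feasible_def _ _).2 ⟨y, ?_⟩⟩
  rintro e (⟨i, j, hij, rfl⟩ | ⟨i, hi, rfl⟩ | ⟨i, hi, rfl⟩ | ⟨i, t, ht, rfl⟩)
  · have h := le_trans (le_iSup (fun j' => C i j' + (x j' : EReal)) j) (h1 i)
    rw [hCz i j hij, coe2, coe2, EReal.coe_le_coe_iff] at h
    show x j ≤ x i + _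
    push_cast
    linarith
  · have h := h2 i
    rw [hpz i hi, coe2, EReal.coe_le_coe_iff] at h
    show (0 : ℝ) ≤ x i + _
    push_cast
    linarith
  · have h := h3 i hi
    rw [hqz i hi, coe2, EReal.coe_le_coe_iff] at h
    show x i ≤ (0 : ℝ) + _
    push_cast
    linarith
  · have hσt : σ i t = (key i t ht).choose := dif_pos ht
    obtain ⟨hR, hineq⟩ := (key i t ht).choose_spec
    rw [← hσt] at hR hineq
    unfold edge4
    rw [if_pos hR]
    show y t ≤ y (σ i t) + _
    push_cast
    linarith

lemma sigma_to_mem (lam : ℝ) (σ : Fin m → Option (Fin n) → Option (Fin n))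
    (hV : ∀ i j, V i j ≠ ⊤) (hd : ∀ i, d i ≠ ⊤) (hq : ∀ i, q i ≠ ⊥)
    (hCz : ∀ i j, C i j ≠ ⊥ → C i j = ((Cz i j : ℝ) : EReal))
    (hUz : ∀ i j, U i j ≠ ⊥ → U i j = ((Uz i j : ℝ) : EReal))
    (hVz : ∀ i j, V i j ≠ ⊥ → V i j = ((Vz i j : ℝ) : EReal))
    (hbz : ∀ i, b i ≠ ⊥ → b i = ((bz i : ℝ) : EReal))
    (hdz : ∀ i, d i ≠ ⊥ → d i = ((dz i : ℝ) : EReal))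
    (hpz : ∀ i, p i ≠ ⊥ → p i = ((pz i : ℝ) : EReal))
    (hqz : ∀ i, q i ≠ ⊤ → q i = ((qz i : ℝ) : EReal))
    (hf : Feasible (csσ C U V b d p q Cz Uz Vz bz dz pz qz σ) lam) :
    ∃ x : Fin n → ℝ,
      (∀ i, (⨆ j, C i j + (x j : EReal)) ≤ (lam : EReal) + (x i : EReal)) ∧
      (∀ i, p i ≤ (lam : EReal) + (x i : EReal)) ∧
      (∀ i, q i ≠ ⊤ → (x i : EReal) ≤ (lam : EReal) + q i) ∧
      (∀ i, ((⨆ j, U i j + (x j : EReal)) ⊔ b i) ≤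
            ((⨆ j, V i j + (x j : EReal)) ⊔ d i)) := by
  classical
  obtain ⟨y, hy⟩ := (feasible_def _ _).1 hf
  set x : Fin n → ℝ := fun j => y (some j) - y none with hx
  have hrhs : ∀ (i : Fin m) (c : Option (Fin n)), RValid V d i c →
      (((rval Vz dz i c : ℝ) + (c.elim 0 x) : ℝ) : EReal) ≤
        (⨆ l, V i l + (x l : EReal)) ⊔ d i := by
    intro i c hc
    cases c with
    | some l =>
      refine le_sup_of_le_left (le_trans (le_of_eq ?_) (le_iSup _ l))
      rw [hVz i l hc, coe2]
      rfl
    | none =>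
      refine le_sup_of_le_right (le_of_eq ?_)
      rw [hdz i hc]
      norm_num [rval]
  refine ⟨x, ?_, ?_, ?_, ?_⟩
  · intro i
    refine iSup_le fun j => ?_
    by_cases hij : C i j = ⊥
    · rw [hij, EReal.bot_add]
      exact bot_le
    · have hmem : ((some j, some i, -(Cz i j), 1) : E (Option (Fin n))) ∈
          csσ C U V b d p q Cz Uz Vz bz dz pz qz σ := Or.inl ⟨i, j, hij, rfl⟩
      have h := hy _ hmem
      simp only at h
      push_cast at h
      rw [hCz i j hij, coe2, coe2, EReal.coe_le_coe_iff]
      simp only [hx]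
      linarith
  · intro i
    by_cases hi : p i = ⊥
    · rw [hi]; exact bot_le
    · have hmem : ((none, some i, -(pz i), 1) : E (Option (Fin n))) ∈
          csσ C U V b d p q Cz Uz Vz bz dz pz qz σ := Or.inr (Or.inl ⟨i, hi, rfl⟩)
      have h := hy _ hmem
      simp only at h
      push_cast at h
      rw [hpz i hi, coe2, EReal.coe_le_coe_iff]
      simp only [hx]
      linarith
  · intro i hi
    have hmem : ((some i, none, qz i, 1) : E (Option (Fin n))) ∈
        csσ C U V b d p q Cz Uz Vz bz dz pz qz σ := Or.inr (Or.inr (Or.inl ⟨i, hi, rfl⟩))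
    have h := hy _ hmem
    simp only at h
    push_cast at h
    rw [hqz i hi, coe2, EReal.coe_le_coe_iff]
    simp only [hx]
    linarith
  · intro i
    rw [sup_le_iff]
    have main : ∀ t : Option (Fin n), LValid U b i t →
        (((lval Uz bz i t : ℝ) + (t.elim 0 x) : ℝ) : EReal) ≤
          (⨆ l, V i l + (x l : EReal)) ⊔ d i := by
      intro t ht
      have hmem : edge4 V d Uz Vz bz dz i t (σ i t) ∈
          csσ C U V b d p q Cz Uz Vz bz dz pz qz σ := Or.inr (Or.inr (Or.inr ⟨i, t, ht, rfl⟩))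
      have h := hy _ hmem
      by_cases hR : RValid V d i (σ i t)
      · rw [edge4, if_pos hR] at h
        simp only at h
        push_cast at h
        refine le_trans ?_ (hrhs i (σ i t) hR)
        rw [EReal.coe_le_coe_iff]
        have hyt : (t.elim 0 x : ℝ) = y t - y none := by
          cases t with
          | some j => simp [hx]
          | none => simp
        have hyc : ((σ i t).elim 0 x : ℝ) = y (σ i t) - y none := by
          cases hc : σ i t with
          | some j => simp [hx]
          | none => simp
        rw [hyt, hyc]
        linarith
      · rw [edge4, if_neg hR] at h
        simp only at h
        push_cast at h
        linarith
    constructor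
    · refine iSup_le fun j => ?_
      by_cases hij : U i j = ⊥
      · rw [hij, EReal.bot_add]; exact bot_le
      · have h := main (some j) hij
        rw [hUz i j hij, coe2]
        exact h
    · by_cases hi' : b i = ⊥
      · rw [hi']; exact bot_le
      · have h := main none hi'
        rw [hbz i hi']
        simpa [lval] using h

end Concrete


end Stmt12Aux

/-- For tropical pseudoquadratic optimization with integer data, the optimal value
`inf Λ` is a rational number with denominator at most `n + 1`: there is
`1 ≤ d ≤ n+1` with `d · inf Λ ∈ ℤ`.  Here
`Λ = {λ ∈ ℝ : ∃ x ∈ ℝ^n, x⁻ ⊗ C ⊗ x ⊕ x⁻ ⊗ p ⊕ q⁻ ⊗ x ≤ λ and U ⊗ x ⊕ b ≤ V ⊗ x ⊕ d}`. -/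
theorem stmt12 (m n : ℕ) (C : Fin n → Fin n → EReal)
    (U V : Fin m → Fin n → EReal) (b d : Fin m → EReal) (p q : Fin n → EReal)
    (hC : ∀ i j, C i j ≠ ⊤)
    (hU : ∀ i j, U i j ≠ ⊤) (hV : ∀ i j, V i j ≠ ⊤)
    (hb : ∀ i, b i ≠ ⊤) (hd : ∀ i, d i ≠ ⊤)
    (hp : ∀ i, p i ≠ ⊤) (hq : ∀ i, q i ≠ ⊥)
    (hCint : ∀ i j, C i j ≠ ⊥ → ∃ z : ℤ, C i j = ((z : ℝ) : EReal))
    (hUint : ∀ i j, U i j ≠ ⊥ → ∃ z : ℤ, U i j = ((z : ℝ) : EReal))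
    (hVint : ∀ i j, V i j ≠ ⊥ → ∃ z : ℤ, V i j = ((z : ℝ) : EReal))
    (hbint : ∀ i, b i ≠ ⊥ → ∃ z : ℤ, b i = ((z : ℝ) : EReal))
    (hdint : ∀ i, d i ≠ ⊥ → ∃ z : ℤ, d i = ((z : ℝ) : EReal))
    (hpint : ∀ i, p i ≠ ⊥ → ∃ z : ℤ, p i = ((z : ℝ) : EReal))
    (hqint : ∀ i, q i ≠ ⊤ → ∃ z : ℤ, q i = ((z : ℝ) : EReal))
    (Λ : Set ℝ)
    (hΛ : Λ = {lam : ℝ | ∃ x : Fin n → ℝ,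
        (∀ i, (⨆ j, C i j + (x j : EReal)) ≤ (lam : EReal) + (x i : EReal)) ∧
        (∀ i, p i ≤ (lam : EReal) + (x i : EReal)) ∧
        (∀ i, q i ≠ ⊤ → (x i : EReal) ≤ (lam : EReal) + q i) ∧
        (∀ i, ((⨆ j, U i j + (x j : EReal)) ⊔ b i) ≤
              ((⨆ j, V i j + (x j : EReal)) ⊔ d i))})
    (hne : Λ.Nonempty) (hbdd : BddBelow Λ) :
    ∃ k : ℕ, 1 ≤ k ∧ k ≤ n + 1 ∧ ∃ z : ℤ, (k : ℝ) * sInf Λ = (z : ℝ) := by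
  classical
  obtain ⟨Cz, hCz⟩ : ∃ F : Fin n → Fin n → ℤ, ∀ i j, C i j ≠ ⊥ → C i j = ((F i j : ℝ) : EReal) :=
    ⟨fun i j => if h : C i j ≠ ⊥ then (hCint i j h).choose else 0,
     fun i j h => by simp only [dif_pos h]; exact (hCint i j h).choose_spec⟩
  obtain ⟨Uz, hUz⟩ : ∃ F : Fin m → Fin n → ℤ, ∀ i j, U i j ≠ ⊥ → U i j = ((F i j : ℝ) : EReal) :=
    ⟨fun i j => if h : U i j ≠ ⊥ then (hUint i j h).choose else 0,
     fun i j h => by simp only [dif_pos h]; exact (hUint i j h).choose_spec⟩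
  obtain ⟨Vz, hVz⟩ : ∃ F : Fin m → Fin n → ℤ, ∀ i j, V i j ≠ ⊥ → V i j = ((F i j : ℝ) : EReal) :=
    ⟨fun i j => if h : V i j ≠ ⊥ then (hVint i j h).choose else 0,
     fun i j h => by simp only [dif_pos h]; exact (hVint i j h).choose_spec⟩
  obtain ⟨bz, hbz⟩ : ∃ F : Fin m → ℤ, ∀ i, b i ≠ ⊥ → b i = ((F i : ℝ) : EReal) :=
    ⟨fun i => if h : b i ≠ ⊥ then (hbint i h).choose else 0,
     fun i h => by simp only [dif_pos h]; exact (hbint i h).choose_spec⟩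
  obtain ⟨dz, hdz⟩ : ∃ F : Fin m → ℤ, ∀ i, d i ≠ ⊥ → d i = ((F i : ℝ) : EReal) :=
    ⟨fun i => if h : d i ≠ ⊥ then (hdint i h).choose else 0,
     fun i h => by simp only [dif_pos h]; exact (hdint i h).choose_spec⟩
  obtain ⟨pz, hpz⟩ : ∃ F : Fin n → ℤ, ∀ i, p i ≠ ⊥ → p i = ((F i : ℝ) : EReal) :=
    ⟨fun i => if h : p i ≠ ⊥ then (hpint i h).choose else 0,
     fun i h => by simp only [dif_pos h]; exact (hpint i h).choose_spec⟩
  obtain ⟨qz, hqz⟩ : ∃ F : Fin n → ℤ, ∀ i, q i ≠ ⊤ → q i = ((F i : ℝ) : EReal) :=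
    ⟨fun i => if h : q i ≠ ⊤ then (hqint i h).choose else 0,
     fun i h => by simp only [dif_pos h]; exact (hqint i h).choose_spec⟩
  set FS : (Fin m → Option (Fin n) → Option (Fin n)) → Set ℝ :=
    fun σ => {lam | Stmt12Aux.Feasible (Stmt12Aux.csσ C U V b d p q Cz Uz Vz bz dz pz qz σ) lam} with hFS
  have hunion : Λ = ⋃ σ, FS σ := by
    rw [hΛ]
    ext lam
    simp only [Set.mem_setOf_eq, Set.mem_iUnion, hFS]
    constructor
    · rintro ⟨x, h1, h2, h3, h4⟩
      exact Stmt12Aux.mem_to_sigma C U V b d p q Cz Uz Vz bz dz pz qz lam x hU hV hb hd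
        hCz hUz hVz hbz hdz hpz hqz h1 h2 h3 h4
    · rintro ⟨σ, hσ⟩
      exact Stmt12Aux.sigma_to_mem C U V b d p q Cz Uz Vz bz dz pz qz lam σ hV hd hq
        hCz hUz hVz hbz hdz hpz hqz hσ
  have hcard : Fintype.card (Option (Fin n)) = n + 1 := by simp
  have tri : ∀ σ, FS σ = ∅ ∨
      ∃ (a : ℕ) (c : ℤ), 1 ≤ a ∧ a ≤ n + 1 ∧ FS σ = Set.Ici (-(c : ℝ) / (a : ℝ)) := by
    intro σ
    rcases Stmt12Aux.trichotomy (Stmt12Aux.csσ C U V b d p q Cz Uz Vz bz dz pz qz σ)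
        (Stmt12Aux.csσ_finite C U V b d p q Cz Uz Vz bz dz pz qz σ)
        (Stmt12Aux.csσ_slope C U V b d p q Cz Uz Vz bz dz pz qz σ) with h | h | ⟨a, c, h1, h2, h3⟩
    · exact Or.inl h
    · exfalso
      apply h
      have hsub : FS σ ⊆ Λ := by rw [hunion]; exact Set.subset_iUnion FS σ
      exact hbdd.mono hsub
    · exact Or.inr ⟨a, c, h1, by rw [hcard] at h2; exact h2, h3⟩
  set T : Set ℝ := {r | ∃ σ, FS σ = Set.Ici r ∧
      ∃ (a : ℕ) (c : ℤ), 1 ≤ a ∧ a ≤ n + 1 ∧ r = -(c : ℝ) / (a : ℝ)} with hT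
  have hTfin : T.Finite := by
    apply (Set.finite_range (fun σ : Fin m → Option (Fin n) → Option (Fin n) =>
      sInf (FS σ))).subset
    rintro r ⟨σ, hσ, _⟩
    exact ⟨σ, by show sInf (FS σ) = r; rw [hσ, csInf_Ici]⟩
  have hTne : T.Nonempty := by
    obtain ⟨lam, hlam⟩ := hne
    rw [hunion] at hlam
    obtain ⟨σ, hσ⟩ := Set.mem_iUnion.1 hlam
    rcases tri σ with h | ⟨a, c, h1, h2, h3⟩
    · rw [h] at hσ; exact absurd hσ (Set.notMem_empty lam)
    · exact ⟨-(c : ℝ) / (a : ℝ), σ, h3, a, c, h1, h2, rfl⟩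
  have hTne' : hTfin.toFinset.Nonempty := by
    rwa [Set.Finite.toFinset_nonempty]
  set t0 : ℝ := hTfin.toFinset.min' hTne' with ht0
  have ht0T : t0 ∈ T := by
    have := hTfin.toFinset.min'_mem hTne'
    rwa [Set.Finite.mem_toFinset] at this
  have ht0min : ∀ r ∈ T, t0 ≤ r := by
    intro r hr
    exact hTfin.toFinset.min'_le r (hTfin.mem_toFinset.2 hr)
  have hΛeq : Λ = Set.Ici t0 := by
    apply subset_antisymm
    · intro lam hlam
      rw [hunion] at hlam
      obtain ⟨σ, hσ⟩ := Set.mem_iUnion.1 hlam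
      rcases tri σ with h | ⟨a, c, h1, h2, h3⟩
      · rw [h] at hσ; exact absurd hσ (Set.notMem_empty lam)
      · have hrT : -(c : ℝ) / (a : ℝ) ∈ T := ⟨σ, h3, a, c, h1, h2, rfl⟩
        rw [h3] at hσ
        exact le_trans (ht0min _ hrT) hσ
    · obtain ⟨σ0, hσ0, _⟩ := ht0T
      intro lam hlam
      rw [hunion]
      exact Set.mem_iUnion.2 ⟨σ0, by rw [hσ0]; exact hlam⟩
  obtain ⟨σ0, hσ0, a, c, ha1, ha2, hval⟩ := ht0T
  refine ⟨a, ha1, ha2, -c, ?_⟩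
  rw [hΛeq, csInf_Ici, hval]
  have ha : (a : ℝ) ≠ 0 := by positivity
  push_cast
  field_simp
end

section
/- Let U, V ∈ ℝ_max^{m×n}, b, d ∈ ℝ_max^m, p ∈ ℝ_max^n, q ∈ (ℝ ∪ {+∞})^n and λ ∈ ℝ. Define the (m+n+1) × (n+1) matrices A and B(λ) over ℝ_max in block form: A has rows 1..m equal to [U, b], rows m+1..m+n equal to [−∞ (an n×n all-−∞ block), p] (row m+i having entry p_i in the last column), and last row [q^-, −∞] (entry −q_j in column j when q_j ∈ ℝ, −∞ otherwise); B(λ) has rows 1..m equal to [V, d], rows m+1..m+n equal to [λ ⊗ I, −∞] (entry λ in position (m+i, i), −∞ elsewhere), and last row with entry λ in the last column and −∞ elsewhere. Then the following are equivalent: (i) there exists x ∈ ℝ^n with p_i ≤ λ + x_i for all i, x_i ≤ λ + q_i for all i with q_i ∈ ℝ, and max( max_j(u_{ij}+x_j), b_i ) ≤ max( max_j(v_{ij}+x_j), d_i ) for all i; (ii) there exists z ∈ ℝ^{n+1} with A ⊗ z ≤ B(λ) ⊗ z. -/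
private noncomputable def addCoeIso (c : ℝ) : EReal ≃o EReal where
  toFun a := a + (c : EReal)
  invFun a := a - (c : EReal)
  left_inv a := EReal.add_sub_cancel_right
  right_inv a := EReal.sub_add_cancel
  map_rel_iff' := (EReal.addLECancellable_coe c).add_le_add_iff_right

private lemma iSup_add_coe {ι : Sort*} (f : ι → EReal) (c : ℝ) :
    (⨆ i, f i) + (c : EReal) = ⨆ i, f i + (c : EReal) :=
  (addCoeIso c).map_iSup f

private lemma sup_add_coe (a b : EReal) (c : ℝ) :
    (a ⊔ b) + (c : EReal) = (a + c) ⊔ (b + c) :=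
  (addCoeIso c).map_sup a b

private lemma add_coe_le_add_coe {a b : EReal} (c : ℝ) :
    a + (c : EReal) ≤ b + (c : EReal) ↔ a ≤ b :=
  (EReal.addLECancellable_coe c).add_le_add_iff_right

private lemma isup_unit_row {n : ℕ} (i : Fin n) (c : ℝ) (g : Fin n → EReal) :
    (⨆ j, (if i = j then (c : EReal) else ⊥) + g j) = (c : EReal) + g i := by
  apply le_antisymm
  · refine iSup_le fun j => ?_
    rcases eq_or_ne i j with h | h
    · subst h; simp
    · simp [h]
  · have := le_iSup (fun j => (if i = j then (c : EReal) else ⊥) + g j) i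
    simpa using this

/-- The constraints of the tropical pseudolinear problem at parameter `λ` have a
finite solution `x ∈ ℝ^n` iff the parametric two-sided system `A ⊗ z ≤ B(λ) ⊗ z`
has a finite solution `z ∈ ℝ^{n+1}`, where `A` and `B(λ)` are the
`(m+n+1) × (n+1)` block matrices of the paper; the row index set is encoded as
`Fin m ⊕ Fin n ⊕ Unit` and the column index set as `Fin n ⊕ Unit`. -/
theorem stmt13 (m n : ℕ) (U V : Fin m → Fin n → EReal) (b d : Fin m → EReal)
    (p q : Fin n → EReal) (lam : ℝ)
    (hU : ∀ i j, U i j ≠ ⊤) (hV : ∀ i j, V i j ≠ ⊤)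
    (hb : ∀ i, b i ≠ ⊤) (hd : ∀ i, d i ≠ ⊤)
    (hp : ∀ i, p i ≠ ⊤) (hq : ∀ i, q i ≠ ⊥)
    (A B : (Fin m ⊕ Fin n ⊕ Unit) → (Fin n ⊕ Unit) → EReal)
    (hA : A = fun i j =>
      match i, j with
      | Sum.inl i, Sum.inl j => U i j
      | Sum.inl i, Sum.inr _ => b i
      | Sum.inr (Sum.inl _), Sum.inl _ => ⊥
      | Sum.inr (Sum.inl i), Sum.inr _ => p i
      | Sum.inr (Sum.inr _), Sum.inl j => -(q j)
      | Sum.inr (Sum.inr _), Sum.inr _ => ⊥)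
    (hB : B = fun i j =>
      match i, j with
      | Sum.inl i, Sum.inl j => V i j
      | Sum.inl i, Sum.inr _ => d i
      | Sum.inr (Sum.inl i), Sum.inl j => if i = j then (lam : EReal) else ⊥
      | Sum.inr (Sum.inl _), Sum.inr _ => ⊥
      | Sum.inr (Sum.inr _), Sum.inl _ => ⊥
      | Sum.inr (Sum.inr _), Sum.inr _ => (lam : EReal)) :
    (∃ x : Fin n → ℝ,
        (∀ i, p i ≤ (lam : EReal) + (x i : EReal)) ∧
        (∀ i, q i ≠ ⊤ → (x i : EReal) ≤ (lam : EReal) + q i) ∧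
        (∀ i, ((⨆ j, U i j + (x j : EReal)) ⊔ b i) ≤
              ((⨆ j, V i j + (x j : EReal)) ⊔ d i))) ↔
    (∃ z : (Fin n ⊕ Unit) → ℝ,
        ∀ i, (⨆ j, A i j + (z j : EReal)) ≤ ⨆ j, B i j + (z j : EReal)) := by
  subst hA hB
  constructor
  · rintro ⟨x, h1, h2, h3⟩
    refine ⟨Sum.elim x (fun _ => 0), ?_⟩
    intro i
    rcases i with i | i | u
    · simpa [iSup_sum, iSup_unique] using h3 i
    · simp only [iSup_sum, iSup_unique, Sum.elim_inl, Sum.elim_inr, EReal.coe_zero,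
        add_zero, EReal.bot_add, iSup_bot, bot_sup_eq, sup_bot_eq, isup_unit_row]
      exact le_trans (h1 i) (by simp [isup_unit_row])
    · simp only [iSup_sum, iSup_unique, Sum.elim_inl, Sum.elim_inr, EReal.coe_zero,
        add_zero, EReal.bot_add, iSup_bot, bot_sup_eq, sup_bot_eq]
      refine iSup_le fun j => ?_
      by_cases hqt : q j = ⊤
      · simp [hqt]
      · have hr : ((q j).toReal : EReal) = q j := EReal.coe_toReal hqt (hq j)
        have h := h2 j hqt
        rw [← hr] at h ⊢
        have h' : x j ≤ lam + (q j).toReal := by exact_mod_cast h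
        have h'' : -(q j).toReal + x j ≤ lam := by linarith
        exact_mod_cast h''
  · rintro ⟨z, hz⟩
    set c := z (Sum.inr ()) with hc
    refine ⟨fun j => z (Sum.inl j) - c, ?_, ?_, ?_⟩
    · intro i
      have h := hz (Sum.inr (Sum.inl i))
      simp only [iSup_sum, iSup_unique, EReal.bot_add, iSup_bot, bot_sup_eq, sup_bot_eq,
        isup_unit_row, ← hc] at h
      rw [← add_coe_le_add_coe c, add_assoc]
      have key : ((z (Sum.inl i) - c : ℝ) : EReal) + (c : EReal) = (z (Sum.inl i) : EReal) := by
        norm_cast; ring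
      rw [key]
      exact h
    · intro j hqt
      have h := hz (Sum.inr (Sum.inr ()))
      simp only [iSup_sum, iSup_unique, EReal.bot_add, iSup_bot, bot_sup_eq, sup_bot_eq,
        ← hc] at h
      have h2 := le_trans (le_iSup _ j) h
      have hr : ((q j).toReal : EReal) = q j := EReal.coe_toReal hqt (hq j)
      rw [← hr] at h2 ⊢
      rw [← EReal.coe_neg, ← EReal.coe_add, ← EReal.coe_add, EReal.coe_le_coe_iff] at h2
      show ((z (Sum.inl j) - c : ℝ) : EReal) ≤ ((lam + (q j).toReal : ℝ) : EReal)
      rw [EReal.coe_le_coe_iff]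
      linarith
    · intro i
      have h := hz (Sum.inl i)
      simp only [iSup_sum, iSup_unique, ← hc] at h
      rw [← add_coe_le_add_coe c, sup_add_coe, sup_add_coe, iSup_add_coe, iSup_add_coe]
      have key : ∀ j, ((z (Sum.inl j) - c : ℝ) : EReal) + (c : EReal) = (z (Sum.inl j) : EReal) :=
        fun j => by norm_cast; ring
      simp only [add_assoc, key]
      exact h
end

section
/- Let U ∈ ℝ_max^{m×n}, b ∈ ℝ_max^m, V ∈ ℝ_max^{m×n}, d ∈ ℝ_max^m, and let σ : {1,…,m} → {1,…,n+1} be such that v_{i,σ(i)} ∈ ℝ whenever σ(i) ≤ n and d_i ∈ ℝ whenever σ(i) = n+1. Put J = { j ≤ n : σ(i) = j for some i } and I_j = { i : σ(i) = j } for j ∈ J ∪ {n+1}. Then for every x ∈ ℝ^n the system [ for each i with σ(i) = j ≤ n: max( max_k (u_{ik} + x_k), b_i ) ≤ v_{ij} + x_j; and for each i with σ(i) = n+1: max( max_k (u_{ik} + x_k), b_i ) ≤ d_i ] holds if and only if: (a) for every j ∈ J: max_k ( max_{i ∈ I_j} (u_{ik} − v_{ij}) + x_k ) ≤ x_j and max_{i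 ∈ I_j} (b_i − v_{ij}) ≤ x_j; (b) for every k: x_k ≤ min_{i ∈ I_{n+1}} (d_i − u_{ik}); and (c) for every i ∈ I_{n+1}: b_i ≤ d_i. Here terms with u_{ik} = −∞ or b_i = −∞ are −∞, maxima over empty sets are −∞, d_i − u_{ik} = +∞ when u_{ik} = −∞, and minima over empty sets are +∞. (Thus the system U ⊗ x ⊕ b ≤ V^σ ⊗ x ⊕ d^σ is equivalent to one of the form R ⊗ x ≤ x, l ≤ x ≤ u.) -/
private lemma key0 (a : EReal) (r s : ℝ) :
    a + (r : EReal) ≤ (s : EReal) ↔ a ≤ ((s - r : ℝ) : EReal) := by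
  induction a using EReal.rec with
  | bot => simp [EReal.bot_add]
  | coe a =>
      norm_cast
      constructor <;> intro h <;> linarith
  | top =>
      rw [EReal.top_add_coe]
      simp [top_le_iff, EReal.coe_ne_top, ← EReal.coe_sub]

private lemma key (a : EReal) (ha : a ≠ ⊤) (v r s : ℝ) :
    a + (r : EReal) ≤ (v : EReal) + (s : EReal) ↔
      a - (v : EReal) ≤ ((s - r : ℝ) : EReal) := by
  induction a using EReal.rec with
  | bot => simp [EReal.bot_add, EReal.bot_sub]
  | coe a =>
      norm_cast
      constructor <;> intro h <;> linarith
  | top => exact absurd rfl ha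

private lemma key3 (a : EReal) (ha : a ≠ ⊤) (v s : ℝ) :
    a ≤ (v : EReal) + (s : EReal) ↔ a - (v : EReal) ≤ (s : EReal) := by
  induction a using EReal.rec with
  | bot => simp [EReal.bot_sub]
  | coe a =>
      norm_cast
      constructor <;> intro h <;> linarith
  | top => exact absurd rfl ha

private lemma key2 (a : EReal) (ha : a ≠ ⊤) (δ r : ℝ) :
    a + (r : EReal) ≤ (δ : EReal) ↔ (r : EReal) ≤ (δ : EReal) - a := by
  induction a using EReal.rec with
  | bot => simp [EReal.bot_add, EReal.coe_sub_bot]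
  | coe a =>
      norm_cast
      constructor <;> intro h <;> linarith
  | top => exact absurd rfl ha

/-- Reduction of the one-sided system `U ⊗ x ⊕ b ≤ V^σ ⊗ x ⊕ d^σ` determined by a
strategy `σ : [m] → [n+1]` (encoded as `σ : Fin m → Fin n ⊕ Unit`, with
`Sum.inl j` meaning `σ(i) = j ≤ n` and `Sum.inr ()` meaning `σ(i) = n+1`) to an
equivalent system of the form `R ⊗ x ≤ x`, `l ≤ x ≤ u`.  The conventions are:
empty maxima are `−∞`, empty minima are `+∞`, and `d i − U i k = +∞` when
`U i k = −∞`. -/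
theorem stmt14 (m n : ℕ) (U V : Fin m → Fin n → EReal) (b d : Fin m → EReal)
    (σ : Fin m → Fin n ⊕ Unit)
    (hU : ∀ i j, U i j ≠ ⊤) (hV : ∀ i j, V i j ≠ ⊤)
    (hb : ∀ i, b i ≠ ⊤) (hd : ∀ i, d i ≠ ⊤)
    (hVσ : ∀ i j, σ i = Sum.inl j → V i j ≠ ⊥)
    (hdσ : ∀ i, σ i = Sum.inr () → d i ≠ ⊥) :
    ∀ x : Fin n → ℝ,
      (∀ i, ((⨆ k, U i k + (x k : EReal)) ⊔ b i) ≤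
          (match σ i with
           | Sum.inl j => V i j + (x j : EReal)
           | Sum.inr _ => d i)) ↔
      ((∀ j, (∃ i, σ i = Sum.inl j) →
          ((⨆ k, ((⨆ (i) (_ : σ i = Sum.inl j), (U i k - V i j)) + (x k : EReal)))
              ≤ (x j : EReal) ∧
           (⨆ (i) (_ : σ i = Sum.inl j), (b i - V i j)) ≤ (x j : EReal))) ∧
       (∀ k, (x k : EReal) ≤ ⨅ (i) (_ : σ i = Sum.inr ()), (d i - U i k)) ∧
       (∀ i, σ i = Sum.inr () → b i ≤ d i)) := by
  intro x
  -- intermediate form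
  have main : (∀ i, ((⨆ k, U i k + (x k : EReal)) ⊔ b i) ≤
          (match σ i with
           | Sum.inl j => V i j + (x j : EReal)
           | Sum.inr _ => d i)) ↔
      ((∀ i j, σ i = Sum.inl j →
          ((∀ k, U i k + (x k : EReal) ≤ V i j + (x j : EReal)) ∧
            b i ≤ V i j + (x j : EReal))) ∧
       (∀ i, σ i = Sum.inr () →
          ((∀ k, U i k + (x k : EReal) ≤ d i) ∧ b i ≤ d i))) := by
    constructor
    · intro h
      constructor
      · intro i j hij
        have hi := h i
        rw [hij] at hi
        simp only [sup_le_iff, iSup_le_iff] at hi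
        exact hi
      · intro i hij
        have hi := h i
        rw [hij] at hi
        simp only [sup_le_iff, iSup_le_iff] at hi
        exact hi
    · rintro ⟨h1, h2⟩ i
      rcases hσ : σ i with j | u
      · simp only [sup_le_iff, iSup_le_iff]
        exact h1 i j hσ
      · simp only [sup_le_iff, iSup_le_iff]
        cases u
        exact h2 i hσ
  rw [main]
  constructor
  · rintro ⟨h1, h2⟩
    refine ⟨?_, ?_, ?_⟩
    · rintro j ⟨i0, hi0⟩
      constructor
      · refine iSup_le fun k => ?_
        rw [key0]
        refine iSup_le fun i => iSup_le fun hi => ?_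
        obtain ⟨v, hv⟩ : ∃ v : ℝ, V i j = (v : EReal) :=
          ⟨(V i j).toReal, (EReal.coe_toReal (hV i j) (hVσ i j hi)).symm⟩
        have := (h1 i j hi).1 k
        rw [hv] at this ⊢
        exact (key (U i k) (hU i k) v (x k) (x j)).1 this
      · refine iSup_le fun i => iSup_le fun hi => ?_
        obtain ⟨v, hv⟩ : ∃ v : ℝ, V i j = (v : EReal) :=
          ⟨(V i j).toReal, (EReal.coe_toReal (hV i j) (hVσ i j hi)).symm⟩
        have := (h1 i j hi).2
        rw [hv] at this ⊢
        exact (key3 (b i) (hb i) v (x j)).1 this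
    · intro k
      refine le_iInf fun i => le_iInf fun hi => ?_
      obtain ⟨δ, hδ⟩ : ∃ δ : ℝ, d i = (δ : EReal) :=
        ⟨(d i).toReal, (EReal.coe_toReal (hd i) (hdσ i hi)).symm⟩
      have := (h2 i hi).1 k
      rw [hδ] at this ⊢
      exact (key2 (U i k) (hU i k) δ (x k)).1 this
    · intro i hi
      exact (h2 i hi).2
  · rintro ⟨ha, hm, hc⟩
    constructor
    · intro i j hij
      obtain ⟨v, hv⟩ : ∃ v : ℝ, V i j = (v : EReal) :=
        ⟨(V i j).toReal, (EReal.coe_toReal (hV i j) (hVσ i j hij)).symm⟩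
      constructor
      · intro k
        have h' : (⨆ (i) (_ : σ i = Sum.inl j), (U i k - V i j)) + (x k : EReal)
            ≤ (x j : EReal) :=
          le_trans (le_iSup (fun k => (⨆ (i) (_ : σ i = Sum.inl j),
            (U i k - V i j)) + (x k : EReal)) k) (ha j ⟨i, hij⟩).1
        have h'' : (U i k - V i j) + (x k : EReal) ≤ (x j : EReal) := by
          refine le_trans (add_le_add_left ?_ _) h'
          exact le_iSup₂ (f := fun i' (_ : σ i' = Sum.inl j) => U i' k - V i' j) i hij
        rw [hv] at h'' ⊢
        rw [key0] at h''
        exact (key (U i k) (hU i k) v (x k) (x j)).2 h''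
      · have h'' : b i - V i j ≤ (x j : EReal) :=
          le_trans (le_iSup₂ (f := fun i' (_ : σ i' = Sum.inl j) => b i' - V i' j) i hij)
            (ha j ⟨i, hij⟩).2
        rw [hv] at h'' ⊢
        exact (key3 (b i) (hb i) v (x j)).2 h''
    · intro i hi
      obtain ⟨δ, hδ⟩ : ∃ δ : ℝ, d i = (δ : EReal) :=
        ⟨(d i).toReal, (EReal.coe_toReal (hd i) (hdσ i hi)).symm⟩
      refine ⟨fun k => ?_, hc i hi⟩
      have h' : (x k : EReal) ≤ d i - U i k :=
        le_trans (hm k) (iInf₂_le (f := fun i' (_ : σ i' = Sum.inr ()) => d i' - U i' k) i hi)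
      rw [hδ] at h' ⊢
      exact (key2 (U i k) (hU i k) δ (x k)).2 h'
end

section
/- Let n ≥ 0 be an integer and let λ ∈ ℚ be written as λ = a + c/b with a ∈ ℤ, b ∈ ℕ, 0 < c < b, gcd(c,b) = 1, and suppose b > n+1. Then: (i) the least rational number r with r ≥ λ and denominator (in lowest terms) at most n+1 equals a + min_{1 ≤ d ≤ n+1} ( ⌈(cd+1)/b⌉ / d ); and (ii) the greatest rational number r with r ≤ λ and denominator at most n+1 equals a + max_{1 ≤ d ≤ n+1} ( ⌊(cd−1)/b⌋ / d ). Here ⌈·⌉ and ⌊·⌋ denote rounding up and down to the nearest integer. -/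
/-- Rounding a rational `λ = a + c/b` (with `a ∈ ℤ`, `0 < c < b`, `gcd(c,b) = 1`,
`b > n+1`) to the set of rationals with denominator at most `n+1`:
(i) the least such rational `≥ λ` is `a + min_{1 ≤ d ≤ n+1} ⌈(cd+1)/b⌉ / d`;
(ii) the greatest such rational `≤ λ` is `a + max_{1 ≤ d ≤ n+1} ⌊(cd−1)/b⌋ / d`. -/
theorem stmt15 (n : ℕ) (a : ℤ) (b c : ℕ) (hc : 0 < c) (hcb : c < b)
    (hgcd : Nat.gcd c b = 1) (hbn : n + 1 < b) :
    IsLeast {r : ℚ | (a : ℚ) + (c : ℚ) / (b : ℚ) ≤ r ∧ r.den ≤ n + 1}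
      ((a : ℚ) +
        ((Finset.Icc 1 (n + 1)).image fun d : ℕ =>
            ((⌈((c : ℚ) * (d : ℚ) + 1) / (b : ℚ)⌉ : ℚ) / (d : ℚ))).min'
          ((Finset.nonempty_Icc.mpr (by omega)).image _)) ∧
    IsGreatest {r : ℚ | r ≤ (a : ℚ) + (c : ℚ) / (b : ℚ) ∧ r.den ≤ n + 1}
      ((a : ℚ) +
        ((Finset.Icc 1 (n + 1)).image fun d : ℕ =>
            ((⌊((c : ℚ) * (d : ℚ) - 1) / (b : ℚ)⌋ : ℚ) / (d : ℚ))).max'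
          ((Finset.nonempty_Icc.mpr (by omega)).image _)) := by
  have hb0 : 0 < b := lt_trans hc hcb
  have hbQ : (0:ℚ) < (b:ℚ) := by exact_mod_cast hb0
  have hndvd : ∀ d : ℕ, 1 ≤ d → d ≤ n+1 → ¬ (b ∣ c * d) := by
    intro d h1 h2 hdvd
    have hco : Nat.Coprime b c := Nat.coprime_comm.mp hgcd
    have hbd : b ∣ d := hco.dvd_of_dvd_mul_left hdvd
    have := Nat.le_of_dvd (by omega) hbd
    omega
  have hdenkey : ∀ (k : ℤ) (d : ℕ), 1 ≤ d → d ≤ n+1 →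
      ((a : ℚ) + (k : ℚ) / (d : ℚ)).den ≤ n + 1 := by
    intro k d h1 h2
    have hd0 : (d:ℚ) ≠ 0 := Nat.cast_ne_zero.mpr (by omega)
    have heq : (a : ℚ) + (k : ℚ) / (d : ℚ) = ((a * (d:ℤ) + k : ℤ) : ℚ) / (((d:ℤ) : ℤ) : ℚ) := by
      push_cast
      field_simp
    rw [heq, ← Rat.divInt_eq_div]
    have hdvd : ((Rat.divInt (a * (d:ℤ) + k) (d : ℤ)).den : ℤ) ∣ (d : ℤ) := Rat.den_dvd _ _
    have hdvd' : (Rat.divInt (a * (d:ℤ) + k) (d : ℤ)).den ∣ d := by exact_mod_cast hdvd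
    have := Nat.le_of_dvd (by omega) hdvd'
    omega
  constructor
  · constructor
    · -- least: membership
      obtain ⟨d, hd, hfd⟩ := Finset.mem_image.mp (Finset.min'_mem
        ((Finset.Icc 1 (n + 1)).image fun d : ℕ =>
            ((⌈((c : ℚ) * (d : ℚ) + 1) / (b : ℚ)⌉ : ℚ) / (d : ℚ)))
        ((Finset.nonempty_Icc.mpr (by omega : (1:ℕ) ≤ n+1)).image _))
      rw [Finset.mem_Icc] at hd
      have hdQ : (0:ℚ) < (d:ℚ) := by exact_mod_cast show 0 < d by omega
      rw [← hfd]
      refine ⟨?_, hdenkey _ d hd.1 hd.2⟩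
      have hceil : ((c:ℚ)*d + 1)/b ≤ (⌈((c:ℚ)*d+1)/b⌉ : ℚ) := Int.le_ceil _
      rw [div_le_iff₀ hbQ] at hceil
      have h2 : (c:ℚ)/b ≤ (⌈((c:ℚ)*d+1)/b⌉ : ℚ)/d := by
        rw [div_le_div_iff₀ hbQ hdQ]; nlinarith
      linarith
    · -- least: lower bound
      rintro r ⟨hle, hden⟩
      set d₀ := r.den with hd₀
      have hd₀pos : 1 ≤ d₀ := r.pos
      have hd₀Q : (0:ℚ) < (d₀:ℚ) := by exact_mod_cast show 0 < d₀ by omega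
      have hmin := Finset.min'_le _ _ (Finset.mem_image_of_mem
        (fun d : ℕ => ((⌈((c : ℚ) * (d : ℚ) + 1) / (b : ℚ)⌉ : ℚ) / (d : ℚ)))
        (Finset.mem_Icc.mpr ⟨hd₀pos, hden⟩))
      set p : ℤ := r.num - a * d₀ with hp
      have h : ((r.num:ℚ))/(d₀:ℚ) = r := Rat.num_div_den r
      have h2 : (r.num:ℚ) = r * (d₀:ℚ) := (div_eq_iff hd₀Q.ne').mp h
      have hr_eq : r = (a:ℚ) + (p:ℚ)/(d₀:ℚ) := by
        rw [hp]
        push_cast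
        rw [h2]
        field_simp
        ring
      have hcb' : (c:ℚ)/b ≤ (p:ℚ)/d₀ := by
        rw [hr_eq] at hle; linarith
      have hint : (c:ℤ) * d₀ ≤ p * b := by
        rw [div_le_div_iff₀ hbQ hd₀Q] at hcb'
        exact_mod_cast hcb'
      have hne : (c:ℤ) * d₀ ≠ p * b := by
        intro heq
        apply hndvd d₀ hd₀pos hden
        have : (b:ℤ) ∣ (c:ℤ) * (d₀:ℤ) := ⟨p, by linarith⟩
        exact_mod_cast this
      have hceil : ⌈((c:ℚ)*d₀+1)/b⌉ ≤ p := by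
        rw [Int.ceil_le, div_le_iff₀ hbQ]
        exact_mod_cast (by omega : (c:ℤ) * d₀ + 1 ≤ p * b)
      have hceilQ : ((⌈((c:ℚ)*d₀+1)/b⌉:ℤ) : ℚ) ≤ (p:ℚ) := by exact_mod_cast hceil
      have hmono : ((⌈((c:ℚ)*d₀+1)/b⌉ : ℚ))/d₀ ≤ (p:ℚ)/d₀ := by
        rw [div_le_div_iff₀ hd₀Q hd₀Q]
        nlinarith
      rw [hr_eq]
      linarith
  · constructor
    · -- greatest: membership
      obtain ⟨d, hd, hfd⟩ := Finset.mem_image.mp (Finset.max'_mem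
        ((Finset.Icc 1 (n + 1)).image fun d : ℕ =>
            ((⌊((c : ℚ) * (d : ℚ) - 1) / (b : ℚ)⌋ : ℚ) / (d : ℚ)))
        ((Finset.nonempty_Icc.mpr (by omega : (1:ℕ) ≤ n+1)).image _))
      rw [Finset.mem_Icc] at hd
      have hdQ : (0:ℚ) < (d:ℚ) := by exact_mod_cast show 0 < d by omega
      rw [← hfd]
      refine ⟨?_, hdenkey _ d hd.1 hd.2⟩
      have hfl : (⌊((c:ℚ)*d-1)/b⌋ : ℚ) ≤ ((c:ℚ)*d - 1)/b := Int.floor_le _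
      rw [le_div_iff₀ hbQ] at hfl
      have h2 : (⌊((c:ℚ)*d-1)/b⌋ : ℚ)/d ≤ (c:ℚ)/b := by
        rw [div_le_div_iff₀ hdQ hbQ]
        nlinarith
      linarith
    · -- greatest: upper bound
      rintro r ⟨hle, hden⟩
      set d₀ := r.den with hd₀
      have hd₀pos : 1 ≤ d₀ := r.pos
      have hd₀Q : (0:ℚ) < (d₀:ℚ) := by exact_mod_cast show 0 < d₀ by omega
      have hmax := Finset.le_max' _ _ (Finset.mem_image_of_mem
        (fun d : ℕ => ((⌊((c : ℚ) * (d : ℚ) - 1) / (b : ℚ)⌋ : ℚ) / (d : ℚ)))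
        (Finset.mem_Icc.mpr ⟨hd₀pos, hden⟩))
      set p : ℤ := r.num - a * d₀ with hp
      have h : ((r.num:ℚ))/(d₀:ℚ) = r := Rat.num_div_den r
      have h2 : (r.num:ℚ) = r * (d₀:ℚ) := (div_eq_iff hd₀Q.ne').mp h
      have hr_eq : r = (a:ℚ) + (p:ℚ)/(d₀:ℚ) := by
        rw [hp]
        push_cast
        rw [h2]
        field_simp
        ring
      have hcb' : (p:ℚ)/d₀ ≤ (c:ℚ)/b := by
        rw [hr_eq] at hle; linarith
      have hint : p * b ≤ (c:ℤ) * d₀ := by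
        rw [div_le_div_iff₀ hd₀Q hbQ] at hcb'
        exact_mod_cast hcb'
      have hne : p * b ≠ (c:ℤ) * d₀ := by
        intro heq
        apply hndvd d₀ hd₀pos hden
        have : (b:ℤ) ∣ (c:ℤ) * (d₀:ℤ) := ⟨p, by linarith⟩
        exact_mod_cast this
      have hfl : p ≤ ⌊((c:ℚ)*d₀-1)/b⌋ := by
        rw [Int.le_floor, le_div_iff₀ hbQ]
        exact_mod_cast (by omega : p * b ≤ (c:ℤ) * d₀ - 1)
      have hflQ : (p:ℚ) ≤ ((⌊((c:ℚ)*d₀-1)/b⌋:ℤ) : ℚ) := by exact_mod_cast hfl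
      have hmono : (p:ℚ)/d₀ ≤ ((⌊((c:ℚ)*d₀-1)/b⌋ : ℚ))/d₀ := by
        rw [div_le_div_iff₀ hd₀Q hd₀Q]
        nlinarith
      rw [hr_eq]
      linarith
end

section
/- Let n ≥ 0 be an integer and λ ∈ ℚ. Then the greatest rational number r with r < λ (strictly) and denominator (in lowest terms) at most n+1 is: λ − 1/(n+1) if λ ∈ ℤ; and a + max_{1 ≤ d ≤ n+1} ( ⌊(cd−1)/b⌋ / d ) otherwise, where λ = a + c/b with a = ⌊λ⌋, 0 < c < b, gcd(c,b) = 1. -/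
lemma aux_den_add_int (r : ℚ) (z : ℤ) : (r + (z:ℚ)).den = r.den := by
  refine Nat.dvd_antisymm ?_ ?_
  · simpa using Rat.add_den_dvd r (z:ℚ)
  · have := Rat.add_den_dvd (r + (z:ℚ)) ((-z : ℤ) : ℚ)
    simpa using this

lemma aux_den_div_dvd (m : ℤ) (d : ℕ) : ((m : ℚ) / (d : ℚ)).den ∣ d := by
  have h := Rat.den_dvd m (d : ℤ)
  rw [Rat.divInt_eq_div] at h
  exact_mod_cast h

/-- The greatest rational strictly smaller than `q` with denominator at most `n+1`
is `q − 1/(n+1)` if `q` is an integer, and `⌊q⌋ + max_{1 ≤ d ≤ n+1} ⌊(cd−1)/b⌋ / d`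
otherwise, where `q = ⌊q⌋ + c/b` with `0 < c < b`, `gcd(c,b) = 1` (so
`b = q.den` and `c` is the numerator of the fractional part `Int.fract q`). -/
theorem stmt16 (n : ℕ) (q : ℚ) :
    IsGreatest {r : ℚ | r < q ∧ r.den ≤ n + 1}
      (if q.den = 1 then q - 1 / ((n : ℚ) + 1)
       else (⌊q⌋ : ℚ) +
        ((Finset.Icc 1 (n + 1)).image fun d : ℕ =>
            ((⌊(((Int.fract q).num : ℚ) * (d : ℚ) - 1) / (q.den : ℚ)⌋ : ℚ) / (d : ℚ))).max'
          ((Finset.nonempty_Icc.mpr (by omega)).image _)) := by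
  have hn1 : (0:ℚ) < (n:ℚ) + 1 := by positivity
  split_ifs with h
  · -- q is an integer
    have hq : q = ((q.num : ℤ) : ℚ) := by
      conv_lhs => rw [← Rat.num_div_den q, h]
      simp
    constructor
    · constructor
      · have : (0:ℚ) < 1/((n:ℚ)+1) := by positivity
        linarith
      · have heq : q - 1/((n:ℚ)+1)
            = ((q.num * ((n:ℤ)+1) - 1 : ℤ) : ℚ) / (((n+1 : ℕ) : ℚ)) := by
          rw [hq]; push_cast; field_simp; rw [Rat.num_intCast]; ring
        rw [heq]
        exact Nat.le_of_dvd (by omega) (aux_den_div_dvd _ _)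
    · rintro r ⟨hrq, hrden⟩
      have hdpos : (0:ℚ) < (r.den : ℚ) := by exact_mod_cast r.pos
      have h1 : (r.num : ℚ) / r.den < (q.num : ℚ) := by
        rw [Rat.num_div_den]; rw [hq] at hrq; exact_mod_cast hrq
      have h2 : (r.num : ℚ) < (q.num : ℚ) * r.den := by
        rwa [div_lt_iff₀ hdpos] at h1
      have h3 : r.num < q.num * r.den := by exact_mod_cast h2
      have h4 : r.num ≤ q.num * r.den - 1 := by omega
      have h5 : r ≤ ((q.num * r.den - 1 : ℤ) : ℚ) / r.den := by
        conv_lhs => rw [← Rat.num_div_den r]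
        gcongr
      have h6 : ((q.num * r.den - 1 : ℤ) : ℚ) / r.den = (q.num : ℚ) - 1 / r.den := by
        push_cast; field_simp
      have h7 : 1/((n:ℚ)+1) ≤ 1/(r.den : ℚ) := by
        apply one_div_le_one_div_of_le hdpos
        exact_mod_cast hrden
      rw [hq]; linarith [h5, h6 ▸ h5]
  · -- q is not an integer
    set b := q.den with hb
    set c := (Int.fract q).num with hc
    have hbpos : 0 < b := q.pos
    have hfd : (Int.fract q).den = b := by
      rw [Int.fract]
      have := aux_den_add_int q (-⌊q⌋)
      simpa [sub_eq_add_neg] using this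
    have hfract : Int.fract q = (c : ℚ) / (b : ℚ) := by
      rw [hc, ← hfd, Rat.num_div_den]
    have hne : q ≠ (⌊q⌋ : ℚ) := fun heq => h (by rw [hb, heq]; simp)
    have hfpos : 0 < Int.fract q := Int.fract_pos.mpr hne
    have hcpos : 0 < c := by rw [hc]; exact Rat.num_pos.mpr hfpos
    have hclt : (c : ℚ) < (b : ℚ) := by
      have h1 : Int.fract q < 1 := Int.fract_lt_one q
      rw [hfract] at h1
      have hbq : (0:ℚ) < (b:ℚ) := by exact_mod_cast hbpos
      rwa [div_lt_one hbq] at h1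
    have hqsplit : q = (⌊q⌋ : ℚ) + (c:ℚ)/(b:ℚ) := by
      rw [← hfract]; linarith [Int.floor_add_fract q]
    constructor
    · -- membership
      have hne' := (Finset.nonempty_Icc.mpr (show (1:ℕ) ≤ n+1 by omega)).image
        (fun d : ℕ => ((⌊((c:ℚ) * (d : ℚ) - 1) / ((b:ℕ) : ℚ)⌋ : ℚ) / (d : ℚ)))
      obtain ⟨d, hdmem, hdeq⟩ := Finset.mem_image.mp (Finset.max'_mem _ hne')
      rw [← hdeq]
      obtain ⟨hd1, hd2⟩ := Finset.mem_Icc.mp hdmem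
      have hdq : (0:ℚ) < (d:ℚ) := by exact_mod_cast hd1
      have hbq : (0:ℚ) < (b:ℚ) := by exact_mod_cast hbpos
      have hfl : ⌊((c:ℚ) * (d:ℚ) - 1) / (b:ℚ)⌋ = (c * d - 1) / (b:ℤ) := by
        have : ((c:ℚ) * (d:ℚ) - 1) = ((c * (d:ℤ) - 1 : ℤ) : ℚ) := by push_cast; ring
        rw [this, Rat.floor_intCast_div_natCast]
      set m : ℤ := (c * d - 1) / (b:ℤ) with hm
      constructor
      · -- < q
        have hmb : m * b ≤ c * d - 1 := Int.ediv_mul_le _ (by positivity)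
        have hlt : (m:ℚ)/(d:ℚ) < (c:ℚ)/(b:ℚ) := by
          rw [div_lt_div_iff₀ hdq hbq]
          have : (m:ℚ) * (b:ℚ) ≤ (c:ℚ) * (d:ℚ) - 1 := by exact_mod_cast hmb
          linarith
        rw [hfl]
        conv_rhs => rw [hqsplit]
        exact add_lt_add_right hlt _
      · -- den bound
        rw [hfl]
        rw [add_comm]
        rw [aux_den_add_int]
        exact le_trans (Nat.le_of_dvd (by omega) (aux_den_div_dvd m d)) hd2
    · -- upper bound
      rintro r ⟨hrq, hrden⟩
      set s : ℚ := r - (⌊q⌋ : ℚ) with hs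
      have hsden : s.den = r.den := by
        rw [hs, sub_eq_add_neg]
        have := aux_den_add_int r (-⌊q⌋)
        simpa using this
      set d : ℕ := r.den with hd
      have hd1 : 1 ≤ d := r.pos
      have hdq : (0:ℚ) < (d:ℚ) := by exact_mod_cast hd1
      have hbq : (0:ℚ) < (b:ℚ) := by exact_mod_cast hbpos
      have hslt : s < (c:ℚ)/(b:ℚ) := by
        rw [hs, hqsplit] at *
        linarith [hrq]
      have hsval : s = (s.num : ℚ) / (d:ℚ) := by
        rw [← hsden] at hd ⊢
        exact (Rat.num_div_den s).symm
      have hnum : s.num * b < c * d := by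
        rw [hsval, div_lt_div_iff₀ hdq hbq] at hslt
        exact_mod_cast hslt
      have hnum2 : s.num ≤ (c * d - 1) / (b:ℤ) := by
        rw [Int.le_ediv_iff_mul_le (by exact_mod_cast hbpos)]
        omega
      have hfl : ⌊((c:ℚ) * (d:ℚ) - 1) / (b:ℚ)⌋ = (c * d - 1) / (b:ℤ) := by
        have : ((c:ℚ) * (d:ℚ) - 1) = ((c * (d:ℤ) - 1 : ℤ) : ℚ) := by push_cast; ring
        rw [this, Rat.floor_intCast_div_natCast]
      have hmem : ((⌊((c:ℚ) * (d:ℚ) - 1) / (b:ℚ)⌋ : ℚ) / (d:ℚ)) ∈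
          (Finset.Icc 1 (n + 1)).image fun d : ℕ =>
            ((⌊((c:ℚ) * (d:ℚ) - 1) / (b:ℚ)⌋ : ℚ) / (d : ℚ)) :=
        Finset.mem_image_of_mem _ (Finset.mem_Icc.mpr ⟨hd1, hrden⟩)
      have hle := Finset.le_max' _ _ hmem
      have hr : r = (⌊q⌋ : ℚ) + s := by rw [hs]; ring
      rw [hr]
      refine add_le_add_right (le_trans ?_ hle) _
      rw [hsval, hfl]
      gcongr
end

section
/- Let U, V ∈ ℝ_max^{m×n}, b, d ∈ ℝ_max^m, p ∈ ℝ_max^n and q ∈ (ℝ ∪ {+∞})^n. Define Λ = { λ ∈ ℝ : ∃ x ∈ ℝ^n such that p_i ≤ λ + x_i for all i, x_i ≤ λ + q_i for all i with q_i ∈ ℝ, and max( max_j (u_{ij} + x_j), b_i ) ≤ max( max_j (v_{ij} + x_j), d_i ) for all i }. Then: (i) Λ is an upper set of ℝ (λ ∈ Λ and λ ≤ μ imply μ ∈ Λ); and (ii) if Λ is nonempty and bounded below, then inf Λ ∈ Λ, i.e., the optimal value of the tropical pseudolinear optimization problem is attained as a minimum of Λ. -/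
namespace Trop17

/-- A difference constraint `x?a - x?b ≤ k·λ + c`, where `x? none = 0`. -/
structure DC (N : ℕ) where
  a : Option (Fin N)
  b : Option (Fin N)
  k : ℝ
  c : ℝ

def ev {N : ℕ} (x : Fin N → ℝ) : Option (Fin N) → ℝ
  | none => 0
  | some i => x i

def DC.holds {N : ℕ} (t : DC N) (lam : ℝ) (x : Fin N → ℝ) : Prop :=
  ev x t.a - ev x t.b ≤ t.k * lam + t.c

def Feas {N : ℕ} (L : List (DC N)) (lam : ℝ) : Prop :=
  ∃ x : Fin N → ℝ, ∀ t ∈ L, t.holds lam x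

/-! ### Fourier–Motzkin elimination -/

def pd {N : ℕ} : Option (Fin (N + 1)) → Option (Fin N) := fun o =>
  o.bind fun v => if h : v = Fin.last N then none else some (v.castPred h)

def isUp {N : ℕ} (t : DC (N + 1)) : Prop :=
  t.a = some (Fin.last N) ∧ t.b ≠ some (Fin.last N)

def isLow {N : ℕ} (t : DC (N + 1)) : Prop :=
  t.b = some (Fin.last N) ∧ t.a ≠ some (Fin.last N)

instance {N : ℕ} (t : DC (N + 1)) : Decidable (isUp t) := by unfold isUp; infer_instance
instance {N : ℕ} (t : DC (N + 1)) : Decidable (isLow t) := by unfold isLow; infer_instance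

def down {N : ℕ} (t : DC (N + 1)) : DC N := ⟨pd t.a, pd t.b, t.k, t.c⟩

def comb {N : ℕ} (u l : DC (N + 1)) : DC N := ⟨pd l.a, pd u.b, u.k + l.k, u.c + l.c⟩

def elim {N : ℕ} (L : List (DC (N + 1))) : List (DC N) :=
  ((L.filter fun t => decide (¬ isUp t ∧ ¬ isLow t)).map down) ++
    (L.filter fun t => decide (isUp t)).flatMap fun u =>
      (L.filter fun t => decide (isLow t)).map (comb u)

lemma ev_pd {N : ℕ} (x : Fin (N + 1) → ℝ) {o : Option (Fin (N + 1))}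
    (h : o ≠ some (Fin.last N)) : ev (x ∘ Fin.castSucc) (pd o) = ev x o := by
  cases o with
  | none => rfl
  | some v =>
      have hv : v ≠ Fin.last N := by simpa using h
      simp [pd, ev, hv, Fin.castSucc_castPred]

lemma down_holds {N : ℕ} (t : DC (N + 1)) (h1 : ¬ isUp t) (h2 : ¬ isLow t)
    (lam : ℝ) (x : Fin (N + 1) → ℝ) :
    (down t).holds lam (x ∘ Fin.castSucc) ↔ t.holds lam x := by
  unfold isUp at h1
  unfold isLow at h2
  push_neg at h1 h2
  by_cases ha : t.a = some (Fin.last N)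
  · have hb : t.b = some (Fin.last N) := h1 ha
    simp [DC.holds, down, ha, hb, pd, ev]
  · by_cases hb : t.b = some (Fin.last N)
    · exact absurd (h2 hb) ha
    · simp [DC.holds, down, ev_pd x ha, ev_pd x hb]

lemma le_foldr_max {l : List ℝ} {a : ℝ} (h : a ∈ l) (c : ℝ) : a ≤ l.foldr max c := by
  induction l with
  | nil => cases h
  | cons hd tl ih =>
      rcases List.mem_cons.1 h with h | h
      · subst h; exact le_max_left _ _
      · exact le_trans (ih h) (le_max_right _ _)

lemma foldr_max_le {l : List ℝ} {u c : ℝ} (h : ∀ a ∈ l, a ≤ u) (hc : c ≤ u) :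
    l.foldr max c ≤ u := by
  induction l with
  | nil => exact hc
  | cons hd tl ih =>
      exact max_le (h hd List.mem_cons_self) (ih fun a ha => h a (List.mem_cons_of_mem _ ha))

lemma foldr_min_le {l : List ℝ} {a : ℝ} (h : a ∈ l) (c : ℝ) : l.foldr min c ≤ a := by
  induction l with
  | nil => cases h
  | cons hd tl ih =>
      rcases List.mem_cons.1 h with h | h
      · subst h; exact min_le_left _ _
      · exact le_trans (min_le_right _ _) (ih h)

theorem feas_elim {N : ℕ} (L : List (DC (N + 1))) (lam : ℝ) :
    Feas L lam ↔ Feas (elim L) lam := by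
  constructor
  · rintro ⟨x, hx⟩
    refine ⟨x ∘ Fin.castSucc, fun t ht => ?_⟩
    rcases List.mem_append.1 ht with ht | ht
    · obtain ⟨s, hs, rfl⟩ := List.mem_map.1 ht
      obtain ⟨hsL, hcond⟩ := List.mem_filter.1 hs
      have hc := of_decide_eq_true hcond
      exact (down_holds s hc.1 hc.2 lam x).2 (hx s hsL)
    · obtain ⟨u, hu, ht'⟩ := List.mem_flatMap.1 ht
      obtain ⟨l, hl, rfl⟩ := List.mem_map.1 ht'
      obtain ⟨huL, hucond⟩ := List.mem_filter.1 hu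
      obtain ⟨hlL, hlcond⟩ := List.mem_filter.1 hl
      have hu' := of_decide_eq_true hucond
      have hl' := of_decide_eq_true hlcond
      have h1 := hx u huL
      have h2 := hx l hlL
      unfold DC.holds at h1 h2 ⊢
      rw [hu'.1] at h1
      rw [hl'.1] at h2
      simp only [comb]
      rw [ev_pd x hl'.2, ev_pd x hu'.2]
      have : ev x l.a - ev x u.b ≤ (u.k + l.k) * lam + (u.c + l.c) := by
        have := add_le_add h1 h2
        simp only [ev] at this ⊢
        ring_nf at this ⊢
        linarith
      simpa [ev] using this
  · rintro ⟨x', hx'⟩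
    set ups := L.filter fun t => decide (isUp t) with hups
    set lows := L.filter fun t => decide (isLow t) with hlows
    set fup : DC (N + 1) → ℝ := fun u => ev x' (pd u.b) + (u.k * lam + u.c) with hfup
    set flow : DC (N + 1) → ℝ := fun l => ev x' (pd l.a) - (l.k * lam + l.c) with hflow
    set B : ℝ := (ups.map fup).foldr min 0 with hB
    set xl : ℝ := (lows.map flow).foldr max B with hxl
    set x : Fin (N + 1) → ℝ := Fin.snoc x' xl with hx
    have hcomp : x ∘ Fin.castSucc = x' := by
      funext i; simp [hx, Fin.snoc_castSucc]
    have hxlast : x (Fin.last N) = xl := by simp [hx]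
    -- every lower bound is ≤ every upper bound
    have key : ∀ u ∈ ups, ∀ l ∈ lows, flow l ≤ fup u := by
      intro u hu l hl
      have hmem : comb u l ∈ elim L :=
        List.mem_append.2 (Or.inr (List.mem_flatMap.2 ⟨u, hu, List.mem_map.2 ⟨l, hl, rfl⟩⟩))
      have := hx' _ hmem
      unfold DC.holds at this
      simp only [comb] at this
      simp only [hfup, hflow]
      ring_nf at this ⊢
      linarith
    have hlowle : ∀ l ∈ lows, flow l ≤ xl := by
      intro l hl
      exact le_foldr_max (List.mem_map.2 ⟨l, hl, rfl⟩) _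
    have hxlle : ∀ u ∈ ups, xl ≤ fup u := by
      intro u hu
      refine foldr_max_le ?_ (foldr_min_le (List.mem_map.2 ⟨u, hu, rfl⟩) _)
      rintro a ha
      obtain ⟨l, hl, rfl⟩ := List.mem_map.1 ha
      exact key u hu l hl
    refine ⟨x, fun t ht => ?_⟩
    by_cases h1 : isUp t
    · have htu : t ∈ ups := List.mem_filter.2 ⟨ht, decide_eq_true h1⟩
      have := hxlle t htu
      unfold DC.holds
      rw [h1.1]
      have e1 : ev x (some (Fin.last N)) = xl := hxlast
      rw [e1]
      have hb : ev x t.b = ev x' (pd t.b) := by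
        rw [← hcomp] at *
        exact (ev_pd x h1.2).symm
      rw [hb]
      simp only [hfup] at this
      linarith
    · by_cases h2 : isLow t
      · have htl : t ∈ lows := List.mem_filter.2 ⟨ht, decide_eq_true h2⟩
        have := hlowle t htl
        unfold DC.holds
        rw [h2.1]
        have e1 : ev x (some (Fin.last N)) = xl := hxlast
        rw [e1]
        have ha : ev x t.a = ev x' (pd t.a) := by
          rw [← hcomp] at *
          exact (ev_pd x h2.2).symm
        rw [ha]
        simp only [hflow] at this
        linarith
      · have hmem : down t ∈ elim L :=
          List.mem_append.2 (Or.inl (List.mem_map.2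
            ⟨t, List.mem_filter.2 ⟨ht, decide_eq_true ⟨h1, h2⟩⟩, rfl⟩))
        have := hx' _ hmem
        rw [← hcomp] at this
        exact (down_holds t h1 h2 lam x).1 this

theorem isClosed_feas {N : ℕ} (L : List (DC N)) : IsClosed {lam : ℝ | Feas L lam} := by
  induction N with
  | zero =>
      have : {lam : ℝ | Feas L lam} = ⋂ t ∈ L, {lam : ℝ | (0 : ℝ) ≤ t.k * lam + t.c} := by
        ext lam
        have hev : ∀ (x : Fin 0 → ℝ) (o : Option (Fin 0)), ev x o = 0 := by
          intro x o; cases o with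
          | none => rfl
          | some i => exact i.elim0
        simp only [Set.mem_setOf_eq, Set.mem_iInter, Feas, DC.holds]
        constructor
        · rintro ⟨x, hx⟩ t ht
          have := hx t ht
          rw [hev x t.a, hev x t.b] at this
          linarith
        · intro h
          refine ⟨fun i => i.elim0, fun t ht => ?_⟩
          rw [hev _ t.a, hev _ t.b]
          have := h t ht
          linarith
      rw [this]
      exact isClosed_biInter fun t _ =>
        isClosed_le continuous_const ((continuous_const.mul continuous_id).add continuous_const)
  | succ N ih =>
      have : {lam : ℝ | Feas L lam} = {lam : ℝ | Feas (elim L) lam} := by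
        ext lam; exact feas_elim L lam
      rw [this]
      exact ih (elim L)

/-! ### Encoding the tropical problem -/

lemma forall_mem_bind {α β : Type*} {l : List α} {f : α → List β} {P : β → Prop} :
    (∀ t ∈ l.flatMap f, P t) ↔ ∀ a ∈ l, ∀ t ∈ f a, P t := by
  constructor
  · intro h a ha t ht; exact h t (List.mem_flatMap.2 ⟨a, ha, ht⟩)
  · intro h t ht; obtain ⟨a, ha, ht'⟩ := List.mem_flatMap.1 ht; exact h a ha t ht'

open Classical in
noncomputable def encLE {n : ℕ} (e f : EReal) (a bb : Option (Fin n)) : List (DC n) :=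
  if e = ⊥ then [] else if f = ⊥ then [⟨none, none, 0, -1⟩]
  else [⟨a, bb, 0, f.toReal - e.toReal⟩]

lemma encLE_iff {n : ℕ} {e f : EReal} (he : e ≠ ⊤) (hf : f ≠ ⊤) (a bb : Option (Fin n))
    (lam : ℝ) (x : Fin n → ℝ) :
    (∀ t ∈ encLE e f a bb, t.holds lam x) ↔
      e + ((ev x a : ℝ) : EReal) ≤ f + ((ev x bb : ℝ) : EReal) := by
  induction e using EReal.rec with
  | bot => simp [encLE]
  | top => exact absurd rfl he
  | coe r =>
    induction f using EReal.rec with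
    | bot =>
        simp only [encLE, if_neg (EReal.coe_ne_bot r), if_pos rfl,
          List.forall_mem_singleton, DC.holds, ev, EReal.bot_add]
        constructor
        · intro h; exfalso; norm_num at h
        · intro h; exfalso
          rw [← EReal.coe_add] at h
          exact (EReal.coe_ne_bot _) (le_bot_iff.1 h)
    | top => exact absurd rfl hf
    | coe s =>
        simp only [encLE, if_neg (EReal.coe_ne_bot r), if_neg (EReal.coe_ne_bot s),
          List.forall_mem_singleton, DC.holds, EReal.toReal_coe,
          ← EReal.coe_add, EReal.coe_le_coe_iff]
        constructor
        · intro h; linarith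
        · intro h; linarith

open Classical in
noncomputable def encP {n : ℕ} (e : EReal) (j : Fin n) : List (DC n) :=
  if e = ⊥ then [] else [⟨none, some j, 1, -e.toReal⟩]

lemma encP_iff {n : ℕ} {e : EReal} (he : e ≠ ⊤) (j : Fin n) (lam : ℝ) (x : Fin n → ℝ) :
    (∀ t ∈ encP e j, t.holds lam x) ↔ e ≤ (lam : EReal) + (x j : EReal) := by
  induction e using EReal.rec with
  | bot => simp [encP]
  | top => exact absurd rfl he
  | coe r =>
      simp only [encP, if_neg (EReal.coe_ne_bot r), List.forall_mem_singleton, DC.holds, ev,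
        EReal.toReal_coe, ← EReal.coe_add, EReal.coe_le_coe_iff]
      constructor
      · intro h; linarith
      · intro h; linarith

open Classical in
noncomputable def encQ {n : ℕ} (e : EReal) (j : Fin n) : List (DC n) :=
  if e = ⊤ then [] else [⟨some j, none, 1, e.toReal⟩]

lemma encQ_iff {n : ℕ} {e : EReal} (he : e ≠ ⊥) (j : Fin n) (lam : ℝ) (x : Fin n → ℝ) :
    (∀ t ∈ encQ e j, t.holds lam x) ↔ (e ≠ ⊤ → (x j : EReal) ≤ (lam : EReal) + e) := by
  induction e using EReal.rec with
  | bot => exact absurd rfl he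
  | top => simp [encQ]
  | coe r =>
      rw [encQ, if_neg (EReal.coe_ne_top r)]
      simp only [List.forall_mem_singleton, DC.holds, ev, EReal.toReal_coe, ne_eq,
        EReal.coe_ne_top, not_false_eq_true, forall_const, ← EReal.coe_add,
        EReal.coe_le_coe_iff]
      constructor
      · intro h; linarith
      · intro h; linarith

section Enc

variable {m n : ℕ} (U V : Fin m → Fin n → EReal) (b d : Fin m → EReal) (p q : Fin n → EReal)

/-- target value of row `i` under choice `c` (variable part separate). -/
noncomputable def Tc (i : Fin m) (c : Option (Fin n)) : EReal :=
  c.elim (d i) fun j0 => V i j0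

noncomputable def rowL (i : Fin m) (c : Option (Fin n)) : List (DC n) :=
  ((List.finRange n).flatMap fun j => encLE (U i j) (Tc V d i c) (some j) c)
    ++ encLE (b i) (Tc V d i c) none c

noncomputable def sys (σ : Fin m → Option (Fin n)) : List (DC n) :=
  ((List.finRange n).flatMap fun j => encP (p j) j ++ encQ (q j) j)
    ++ (List.finRange m).flatMap fun i => rowL U V b d i (σ i)

/-- full target value of row `i` under choice `c`. -/
noncomputable def Tv (x : Fin n → ℝ) (i : Fin m) (c : Option (Fin n)) : EReal :=
  c.elim (d i) fun j0 => V i j0 + (x j0 : EReal)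

lemma Tv_eq (x : Fin n → ℝ) (i : Fin m) (c : Option (Fin n)) :
    Tv V d x i c = Tc V d i c + ((ev x c : ℝ) : EReal) := by
  cases c with
  | none => simp [Tv, Tc, ev]
  | some j0 => simp [Tv, Tc, ev]

variable (hU : ∀ i j, U i j ≠ ⊤) (hV : ∀ i j, V i j ≠ ⊤)
  (hb : ∀ i, b i ≠ ⊤) (hd : ∀ i, d i ≠ ⊤) (hp : ∀ i, p i ≠ ⊤) (hq : ∀ i, q i ≠ ⊥)

include hV hd in
lemma Tc_ne_top (i : Fin m) (c : Option (Fin n)) : Tc V d i c ≠ ⊤ := by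
  cases c with
  | none => exact hd i
  | some j0 => exact hV i j0

include hU hV hb hd in
lemma rowL_iff (i : Fin m) (c : Option (Fin n)) (lam : ℝ) (x : Fin n → ℝ) :
    (∀ t ∈ rowL U V b d i c, t.holds lam x) ↔
      ((∀ j, U i j + (x j : EReal) ≤ Tv V d x i c) ∧ b i ≤ Tv V d x i c) := by
  unfold rowL
  rw [List.forall_mem_append, forall_mem_bind]
  constructor
  · rintro ⟨h1, h2⟩
    constructor
    · intro j
      have := (encLE_iff (hU i j) (Tc_ne_top V d hV hd i c) (some j) c lam x).1
        (h1 j (List.mem_finRange j))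
      rw [Tv_eq]
      simpa [ev] using this
    · have := (encLE_iff (hb i) (Tc_ne_top V d hV hd i c) none c lam x).1 h2
      rw [Tv_eq]
      simpa [ev] using this
  · rintro ⟨h1, h2⟩
    constructor
    · intro j _
      rw [encLE_iff (hU i j) (Tc_ne_top V d hV hd i c) (some j) c lam x]
      have := h1 j
      rw [Tv_eq] at this
      simpa [ev] using this
    · rw [encLE_iff (hb i) (Tc_ne_top V d hV hd i c) none c lam x]
      have := h2
      rw [Tv_eq] at this
      simpa [ev] using this

include hU hV hb hd hp hq in
lemma sys_iff (σ : Fin m → Option (Fin n)) (lam : ℝ) (x : Fin n → ℝ) :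
    (∀ t ∈ sys U V b d p q σ, t.holds lam x) ↔
      ((∀ j, p j ≤ (lam : EReal) + (x j : EReal)) ∧
       (∀ j, q j ≠ ⊤ → (x j : EReal) ≤ (lam : EReal) + q j) ∧
       (∀ i, (∀ j, U i j + (x j : EReal) ≤ Tv V d x i (σ i)) ∧ b i ≤ Tv V d x i (σ i))) := by
  unfold sys
  rw [List.forall_mem_append, forall_mem_bind, forall_mem_bind]
  constructor
  · rintro ⟨h1, h2⟩
    refine ⟨fun j => ?_, fun j => ?_, fun i => ?_⟩
    · exact (encP_iff (hp j) j lam x).1 ((List.forall_mem_append.1 (h1 j (List.mem_finRange j))).1)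
    · exact (encQ_iff (hq j) j lam x).1 ((List.forall_mem_append.1 (h1 j (List.mem_finRange j))).2)
    · exact (rowL_iff U V b d hU hV hb hd i (σ i) lam x).1 (h2 i (List.mem_finRange i))
  · rintro ⟨h1, h2, h3⟩
    refine ⟨fun j _ => ?_, fun i _ => ?_⟩
    · exact List.forall_mem_append.2
        ⟨(encP_iff (hp j) j lam x).2 (h1 j), (encQ_iff (hq j) j lam x).2 (h2 j)⟩
    · exact (rowL_iff U V b d hU hV hb hd i (σ i) lam x).2 (h3 i)

lemma rowOK_of_le (x : Fin n → ℝ) (i : Fin m)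
    (h : ((⨆ j, U i j + (x j : EReal)) ⊔ b i) ≤ ((⨆ j, V i j + (x j : EReal)) ⊔ d i)) :
    ∃ c : Option (Fin n),
      (∀ j, U i j + (x j : EReal) ≤ Tv V d x i c) ∧ b i ≤ Tv V d x i c := by
  have hL : ∀ j, U i j + (x j : EReal) ≤ ((⨆ j, V i j + (x j : EReal)) ⊔ d i) :=
    fun j => le_trans (le_trans (le_iSup (fun j => U i j + (x j : EReal)) j) le_sup_left) h
  have hLb : b i ≤ ((⨆ j, V i j + (x j : EReal)) ⊔ d i) := le_trans le_sup_right h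
  rcases le_total (⨆ j, V i j + (x j : EReal)) (d i) with hc | hc
  · refine ⟨none, fun j => ?_, ?_⟩
    · exact le_trans (hL j) (by simpa [Tv] using sup_le hc le_rfl)
    · exact le_trans hLb (by simpa [Tv] using sup_le hc le_rfl)
  · rcases isEmpty_or_nonempty (Fin n) with hE | hNE
    · have hsup : (⨆ j, V i j + (x j : EReal)) = ⊥ := by
        exact iSup_of_empty _
      refine ⟨none, fun j => (hE.elim j), ?_⟩
      have : ((⨆ j, V i j + (x j : EReal)) ⊔ d i) = d i := by
        simp [hsup]
      rw [this] at hLb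
      simpa [Tv] using hLb
    · obtain ⟨j0, hj0⟩ := Finite.exists_max (fun j => V i j + (x j : EReal))
      have hsup : ((⨆ j, V i j + (x j : EReal)) ⊔ d i) ≤ V i j0 + (x j0 : EReal) :=
        sup_le (iSup_le hj0) (le_trans hc (iSup_le hj0))
      refine ⟨some j0, fun j => ?_, ?_⟩
      · exact le_trans (hL j) (by simpa [Tv] using hsup)
      · exact le_trans hLb (by simpa [Tv] using hsup)

lemma le_of_rowOK (x : Fin n → ℝ) (i : Fin m) (c : Option (Fin n))
    (h1 : ∀ j, U i j + (x j : EReal) ≤ Tv V d x i c) (h2 : b i ≤ Tv V d x i c) :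
    ((⨆ j, U i j + (x j : EReal)) ⊔ b i) ≤ ((⨆ j, V i j + (x j : EReal)) ⊔ d i) := by
  have hT : Tv V d x i c ≤ ((⨆ j, V i j + (x j : EReal)) ⊔ d i) := by
    cases c with
    | none => simpa [Tv] using (le_sup_right : d i ≤ _)
    | some j0 =>
        exact le_trans (by simp [Tv]) (le_trans (le_iSup (fun j => V i j + (x j : EReal)) j0)
          le_sup_left)
  exact sup_le (iSup_le fun j => le_trans (h1 j) hT) (le_trans h2 hT)

include hU hV hb hd hp hq in
lemma main_iff (lam : ℝ) :
    (∃ x : Fin n → ℝ,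
        (∀ i, p i ≤ (lam : EReal) + (x i : EReal)) ∧
        (∀ i, q i ≠ ⊤ → (x i : EReal) ≤ (lam : EReal) + q i) ∧
        (∀ i, ((⨆ j, U i j + (x j : EReal)) ⊔ b i) ≤
              ((⨆ j, V i j + (x j : EReal)) ⊔ d i))) ↔
      ∃ σ : Fin m → Option (Fin n), Feas (sys U V b d p q σ) lam := by
  constructor
  · rintro ⟨x, h1, h2, h3⟩
    choose σ hσ using fun i => rowOK_of_le U V b d x i (h3 i)
    exact ⟨σ, x, (sys_iff U V b d p q hU hV hb hd hp hq σ lam x).2 ⟨h1, h2, hσ⟩⟩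
  · rintro ⟨σ, x, hx⟩
    obtain ⟨h1, h2, h3⟩ := (sys_iff U V b d p q hU hV hb hd hp hq σ lam x).1 hx
    exact ⟨x, h1, h2, fun i => le_of_rowOK U V b d x i (σ i) (h3 i).1 (h3 i).2⟩

end Enc

end Trop17


/-- The feasibility set `Λ` of the tropical pseudolinear optimization problem
`Λ = {λ ∈ ℝ : ∃ x ∈ ℝ^n, x⁻ ⊗ p ⊕ q⁻ ⊗ x ≤ λ and U ⊗ x ⊕ b ≤ V ⊗ x ⊕ d}`
is an upper set of `ℝ`, and if it is nonempty and bounded below then its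
infimum belongs to `Λ` (the optimal value is attained). -/
theorem stmt17 (m n : ℕ) (U V : Fin m → Fin n → EReal) (b d : Fin m → EReal)
    (p q : Fin n → EReal)
    (hU : ∀ i j, U i j ≠ ⊤) (hV : ∀ i j, V i j ≠ ⊤)
    (hb : ∀ i, b i ≠ ⊤) (hd : ∀ i, d i ≠ ⊤)
    (hp : ∀ i, p i ≠ ⊤) (hq : ∀ i, q i ≠ ⊥)
    (Λ : Set ℝ)
    (hΛ : Λ = {lam : ℝ | ∃ x : Fin n → ℝ,
        (∀ i, p i ≤ (lam : EReal) + (x i : EReal)) ∧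
        (∀ i, q i ≠ ⊤ → (x i : EReal) ≤ (lam : EReal) + q i) ∧
        (∀ i, ((⨆ j, U i j + (x j : EReal)) ⊔ b i) ≤
              ((⨆ j, V i j + (x j : EReal)) ⊔ d i))}) :
    (∀ lam ∈ Λ, ∀ mu : ℝ, lam ≤ mu → mu ∈ Λ) ∧
    (Λ.Nonempty → BddBelow Λ → sInf Λ ∈ Λ) := by
  subst hΛ
  constructor
  · rintro lam ⟨x, h1, h2, h3⟩ mu hle
    refine ⟨x, fun i => le_trans (h1 i) ?_, fun i hi => le_trans (h2 i hi) ?_, h3⟩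
    · exact add_le_add_left (EReal.coe_le_coe_iff.2 hle) _
    · exact add_le_add_left (EReal.coe_le_coe_iff.2 hle) _
  · intro hne hbdd
    refine IsClosed.csInf_mem ?_ hne hbdd
    have hset : {lam : ℝ | ∃ x : Fin n → ℝ,
        (∀ i, p i ≤ (lam : EReal) + (x i : EReal)) ∧
        (∀ i, q i ≠ ⊤ → (x i : EReal) ≤ (lam : EReal) + q i) ∧
        (∀ i, ((⨆ j, U i j + (x j : EReal)) ⊔ b i) ≤
              ((⨆ j, V i j + (x j : EReal)) ⊔ d i))} =
        ⋃ σ : Fin m → Option (Fin n),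
          {lam : ℝ | Trop17.Feas (Trop17.sys U V b d p q σ) lam} := by
      ext lam
      simp only [Set.mem_setOf_eq, Set.mem_iUnion]
      exact Trop17.main_iff U V b d p q hU hV hb hd hp hq lam
    rw [hset]
    exact isClosed_iUnion_of_finite fun σ => Trop17.isClosed_feas _
end

section
/- Let C ∈ ℝ_max^{n×n}, p ∈ ℝ_max^n and q ∈ (ℝ ∪ {+∞})^n. Then for every x ∈ ℝ^n, max( max_{(i,j) : c_{ij} ∈ ℝ} (c_{ij} + x_j − x_i), max_{i : p_i ∈ ℝ} (p_i − x_i), max_{i : q_i ∈ ℝ} (x_i − q_i) ) ≥ max( ρ(C), (1/2) · max_{i : p_i ∈ ℝ and q_i ∈ ℝ} (p_i − q_i) ), where both sides lie in ℝ ∪ {−∞} and maxima over empty sets are −∞. (In max-plus notation: x^- ⊗ C ⊗ x ⊕ x^- ⊗ p ⊕ q^- ⊗ x ≥ ρ(C) ⊕ (q^- ⊗ p)^{⊗1/2}, so ρ(C) ⊕ (q^- ⊗ p)^{⊗1/2} is a lower bound on the optimal value of the tropical pseudoquadratic optimization problem.) -/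
/-- Max-plus identity matrix: `0` on the diagonal, `−∞` off it. -/
noncomputable def mpId (n : ℕ) : Fin n → Fin n → EReal := fun i j => if i = j then 0 else ⊥

/-- Max-plus matrix product. -/
noncomputable def mpMul {n : ℕ} (A B : Fin n → Fin n → EReal) : Fin n → Fin n → EReal :=
  fun i j => ⨆ k, A i k + B k j

/-- Max-plus matrix powers, `A^0 = I`. -/
noncomputable def mpPow {n : ℕ} (A : Fin n → Fin n → EReal) : ℕ → Fin n → Fin n → EReal
  | 0 => mpId n
  | k + 1 => mpMul (mpPow A k) A

/-- Kleene star truncation `A* = I ⊕ A ⊕ ⋯ ⊕ A^{n−1}` (entrywise maximum). -/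
noncomputable def mpStar {n : ℕ} (A : Fin n → Fin n → EReal) : Fin n → Fin n → EReal :=
  fun i j => ⨆ k : Fin n, mpPow A (k : ℕ) i j

/-- Maximum cycle mean `ρ(A)`: the supremum, over all closed walks
`f 0, f 1, …, f k = f 0` (`k ≥ 1`), of the mean weight of the walk.  A walk using
a `−∞` arc has mean `−∞`, so this equals the maximum mean over elementary cycles
of the digraph of finite entries, and it is `−∞` when that digraph is acyclic. -/
noncomputable def rho {n : ℕ} (A : Fin n → Fin n → EReal) : EReal :=
  ⨆ (k : ℕ) (_ : 0 < k) (f : ℕ → Fin n) (_ : f k = f 0),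
    (((k : ℝ)⁻¹ : ℝ) : EReal) * ∑ i ∈ Finset.range k, A (f i) (f (i + 1))



lemma ereal_coe_sum {α : Type*} (s : Finset α) (f : α → ℝ) :
    ((∑ i ∈ s, f i : ℝ) : EReal) = ∑ i ∈ s, (f i : EReal) :=
  map_sum (⟨⟨(↑), EReal.coe_zero⟩, EReal.coe_add⟩ : ℝ →+ EReal) f s

lemma ereal_sum_eq_bot {α : Type*} (s : Finset α) (f : α → EReal)
    {a : α} (ha : a ∈ s) (hb : f a = ⊥) : ∑ i ∈ s, f i = ⊥ := by
  classical
  rw [← Finset.add_sum_erase s f ha, hb, EReal.bot_add]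

/-- Lower bound for tropical pseudoquadratic optimization: for every `x ∈ ℝ^n`,
`x⁻ ⊗ C ⊗ x ⊕ x⁻ ⊗ p ⊕ q⁻ ⊗ x ≥ ρ(C) ⊕ (q⁻ ⊗ p)^{⊗1/2}`,
all maxima being taken over indices with finite entries (empty maxima `−∞`). -/
theorem stmt18 (n : ℕ) (C : Fin n → Fin n → EReal) (p q : Fin n → EReal)
    (hC : ∀ i j, C i j ≠ ⊤) (hp : ∀ i, p i ≠ ⊤) (hq : ∀ i, q i ≠ ⊥) :
    ∀ x : Fin n → ℝ,
      rho C ⊔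
        ((((2 : ℝ)⁻¹ : ℝ) : EReal) * ⨆ (i) (_ : p i ≠ ⊥) (_ : q i ≠ ⊤), (p i - q i)) ≤
      (⨆ (i) (j) (_ : C i j ≠ ⊥), (C i j + (x j : EReal) - (x i : EReal))) ⊔
      (⨆ (i) (_ : p i ≠ ⊥), (p i - (x i : EReal))) ⊔
      (⨆ (i) (_ : q i ≠ ⊤), ((x i : EReal) - q i)) := by
  intro x
  set V := (⨆ (i) (j) (_ : C i j ≠ ⊥), (C i j + (x j : EReal) - (x i : EReal))) ⊔
      (⨆ (i) (_ : p i ≠ ⊥), (p i - (x i : EReal))) ⊔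
      (⨆ (i) (_ : q i ≠ ⊤), ((x i : EReal) - q i)) with hV
  have hCx : ∀ i j, C i j ≠ ⊥ → C i j + (x j : EReal) - (x i : EReal) ≤ V := by
    intro i j h
    refine le_trans ?_ (le_sup_of_le_left le_sup_left)
    exact le_iSup_of_le i (le_iSup_of_le j (le_iSup_of_le h le_rfl))
  have hpx : ∀ i, p i ≠ ⊥ → p i - (x i : EReal) ≤ V := by
    intro i h
    refine le_trans ?_ (le_sup_of_le_left le_sup_right)
    exact le_iSup_of_le i (le_iSup_of_le h le_rfl)
  have hqx : ∀ i, q i ≠ ⊤ → (x i : EReal) - q i ≤ V := by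
    intro i h
    refine le_trans ?_ le_sup_right
    exact le_iSup_of_le i (le_iSup_of_le h le_rfl)
  refine sup_le ?_ ?_
  · -- rho C ≤ V
    rw [rho]
    refine iSup_le fun k => iSup_le fun hk => iSup_le fun f => iSup_le fun hf => ?_
    by_cases hb : ∀ i ∈ Finset.range k, C (f i) (f (i + 1)) ≠ ⊥
    · -- all entries real
      set c : ℕ → ℝ := fun i => (C (f i) (f (i + 1))).toReal with hc
      have hco : ∀ i ∈ Finset.range k, C (f i) (f (i + 1)) = ((c i : ℝ) : EReal) := by
        intro i hi
        exact (EReal.coe_toReal (hC _ _) (hb i hi)).symm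
      rw [Finset.sum_congr rfl hco, ← ereal_coe_sum, ← EReal.coe_mul]
      rcases eq_or_ne V ⊤ with hT | hT
      · rw [hT]; exact le_top
      have hVb : V ≠ ⊥ := by
        have h0 : (0 : ℕ) ∈ Finset.range k := Finset.mem_range.2 hk
        have := hCx (f 0) (f 1) (hb 0 h0)
        rw [hco 0 h0] at this
        intro hVbot
        rw [hVbot, le_bot_iff] at this
        have : ((c 0 + x (f 1) : ℝ) : EReal) - (x (f 0) : EReal) = ⊥ := by
          rw [← this]; norm_cast
        rw [← EReal.coe_sub] at this
        exact EReal.coe_ne_bot _ this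
      lift V to ℝ using ⟨hT, hVb⟩ with v
      rw [EReal.coe_le_coe_iff]
      have hterm : ∀ i ∈ Finset.range k, c i + x (f (i + 1)) - x (f i) ≤ v := by
        intro i hi
        have := hCx (f i) (f (i + 1)) (hb i hi)
        rw [hco i hi] at this
        have h2 : ((c i + x (f (i + 1)) - x (f i) : ℝ) : EReal) ≤ (v : EReal) := by
          rw [EReal.coe_sub, EReal.coe_add]; exact this
        exact EReal.coe_le_coe_iff.1 h2
      have hsum : ∑ i ∈ Finset.range k, (c i + (x (f (i + 1)) - x (f i))) ≤ k * v := by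
        calc ∑ i ∈ Finset.range k, (c i + (x (f (i + 1)) - x (f i)))
            ≤ ∑ i ∈ Finset.range k, v := by
              refine Finset.sum_le_sum fun i hi => ?_
              have := hterm i hi; linarith
          _ = k * v := by rw [Finset.sum_const, Finset.card_range, nsmul_eq_mul]
      rw [Finset.sum_add_distrib, Finset.sum_range_sub (fun i => x (f i)), hf,
        sub_self, add_zero] at hsum
      rw [inv_mul_le_iff₀ (by exact_mod_cast hk)]
      exact hsum
    · push_neg at hb
      obtain ⟨i, hi, hib⟩ := hb
      rw [ereal_sum_eq_bot _ _ hi hib, EReal.mul_bot_of_pos (by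
        exact_mod_cast inv_pos.2 (by exact_mod_cast hk : (0 : ℝ) < k))]
      exact bot_le
  · -- half term
    set S := ⨆ (i) (_ : p i ≠ ⊥) (_ : q i ≠ ⊤), (p i - q i) with hS
    have key : S ≤ ((2 : ℝ) : EReal) * V := by
      refine iSup_le fun i => iSup_le fun hpb => iSup_le fun hqt => ?_
      have hp1 := hpx i hpb
      have hq1 := hqx i hqt
      lift p i to ℝ using ⟨hp i, hpb⟩ with a
      lift q i to ℝ using ⟨hqt, hq i⟩ with b
      rcases eq_or_ne V ⊤ with hT | hT
      · rw [hT, EReal.mul_top_of_pos (by norm_num)]; exact le_top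
      have hVb : V ≠ ⊥ := by
        intro hVbot
        rw [hVbot, le_bot_iff, ← EReal.coe_sub] at hp1
        exact EReal.coe_ne_bot _ hp1
      lift V to ℝ using ⟨hT, hVb⟩ with v
      rw [← EReal.coe_sub, ← EReal.coe_mul, EReal.coe_le_coe_iff]
      rw [← EReal.coe_sub, EReal.coe_le_coe_iff] at hp1 hq1
      linarith
    calc (((2 : ℝ)⁻¹ : ℝ) : EReal) * S
        ≤ (((2 : ℝ)⁻¹ : ℝ) : EReal) * (((2 : ℝ) : EReal) * V) := by
          refine mul_le_mul_of_nonneg_left key (by norm_num)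
      _ = V := by
          rw [← mul_assoc, ← EReal.coe_mul]; norm_num
end

section
/- Let C ∈ ℝ_max^{n×n}, U, V ∈ ℝ_max^{m×n}, b, d ∈ ℝ_max^m, p ∈ ℝ_max^n, q ∈ (ℝ ∪ {+∞})^n and λ ∈ ℝ. Define the (m+2n+1) × (n+1) matrices A and B(λ) over ℝ_max in block form: A has rows 1..m equal to [U, b], rows m+1..m+n equal to [C, −∞], rows m+n+1..m+2n equal to [−∞, p] (row m+n+i having entry p_i in the last column and −∞ elsewhere), and last row [q^-, −∞] (entry −q_j in column j when q_j ∈ ℝ, −∞ otherwise); B(λ) has rows 1..m equal to [V, d], rows m+1..m+n and rows m+n+1..m+2n each equal to [λ ⊗ I, −∞], and last row with entry λ in the last column and −∞ elsewhere. Then the following are equivalent: (i) there exists x ∈ ℝ^n with max_j (c_{ij} + x_j) ≤ λ + x_i for all i, p_i ≤ λ + x_i for all i, x_i ≤ λ + q_i for all i with q_i ∈ ℝ, and max( max_j(u_{ij}+x_j), b_i ) ≤ max( max_j(v_{ij}+x_j), d_i ) for all i; (ii) there exists z ∈ ℝ^{n+1} with A ⊗ z ≤ B(λ) ⊗ z.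 -/
private lemma ereal_add_coe_add_neg (c : EReal) (t : ℝ) :
    c + (t : EReal) + ((-t : ℝ) : EReal) = c := by
  induction c using EReal.rec
  · simp
  · norm_cast; ring
  · rw [EReal.top_add_coe, EReal.top_add_coe]

private lemma ereal_addsub (c : EReal) (a t : ℝ) :
    c + ((a - t : ℝ) : EReal) + (t : EReal) = c + (a : EReal) := by
  induction c using EReal.rec
  · simp
  · norm_cast; ring
  · rw [EReal.top_add_coe, EReal.top_add_coe, EReal.top_add_coe]

private lemma ereal_sup_addr (a b : EReal) (t : EReal) :
    (a ⊔ b) + t = (a + t) ⊔ (b + t) := by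
  rcases le_total a b with h | h
  · rw [sup_eq_right.2 h, sup_eq_right.2 (add_le_add_left h t)]
  · rw [sup_eq_left.2 h, sup_eq_left.2 (add_le_add_left h t)]

private lemma ereal_iSup_addr {ι : Sort*} (f : ι → EReal) (t : ℝ) :
    (⨆ i, f i) + (t : EReal) = ⨆ i, f i + (t : EReal) := by
  apply le_antisymm
  · rw [← (EReal.addLECancellable_coe (-t)).add_le_add_iff_right]
    rw [ereal_add_coe_add_neg]
    refine iSup_le fun i => ?_
    have : f i + (t : EReal) + ((-t : ℝ) : EReal) ≤ (⨆ i, f i + (t:EReal)) + ((-t:ℝ):EReal) :=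
      add_le_add_left (le_iSup (fun i => f i + (t:EReal)) i) _
    rwa [ereal_add_coe_add_neg] at this
  · exact iSup_le fun i => add_le_add_left (le_iSup f i) _

private lemma ereal_iSup_ite {n : ℕ} (i : Fin n) (lam : ℝ) (z : Fin n → ℝ) :
    (⨆ j, (if i = j then (lam : EReal) else ⊥) + (z j : EReal)) = (lam : EReal) + (z i : EReal) := by
  apply le_antisymm
  · refine iSup_le fun j => ?_
    by_cases h : i = j
    · subst h; simp
    · simp [h]
  · have := le_iSup (fun j => (if i = j then (lam : EReal) else ⊥) + (z j : EReal)) i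
    simpa using this

/-- The constraints of the tropical pseudoquadratic problem at parameter `λ` have a
finite solution `x ∈ ℝ^n` iff the parametric two-sided system `A ⊗ z ≤ B(λ) ⊗ z`
has a finite solution `z ∈ ℝ^{n+1}`, where `A` and `B(λ)` are the
`(m+2n+1) × (n+1)` block matrices of the paper; the row index set is encoded as
`Fin m ⊕ Fin n ⊕ Fin n ⊕ Unit` (rows of `[U,b]`, `[C,−∞]`, `[−∞,p]`, `[q⁻,−∞]`)
and the column index set as `Fin n ⊕ Unit`. -/
theorem stmt19 (m n : ℕ) (C : Fin n → Fin n → EReal)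
    (U V : Fin m → Fin n → EReal) (b d : Fin m → EReal)
    (p q : Fin n → EReal) (lam : ℝ)
    (hC : ∀ i j, C i j ≠ ⊤)
    (hU : ∀ i j, U i j ≠ ⊤) (hV : ∀ i j, V i j ≠ ⊤)
    (hb : ∀ i, b i ≠ ⊤) (hd : ∀ i, d i ≠ ⊤)
    (hp : ∀ i, p i ≠ ⊤) (hq : ∀ i, q i ≠ ⊥)
    (A B : (Fin m ⊕ Fin n ⊕ Fin n ⊕ Unit) → (Fin n ⊕ Unit) → EReal)
    (hA : A = fun i j =>
      match i, j with
      | Sum.inl i, Sum.inl j => U i j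
      | Sum.inl i, Sum.inr _ => b i
      | Sum.inr (Sum.inl i), Sum.inl j => C i j
      | Sum.inr (Sum.inl _), Sum.inr _ => ⊥
      | Sum.inr (Sum.inr (Sum.inl _)), Sum.inl _ => ⊥
      | Sum.inr (Sum.inr (Sum.inl i)), Sum.inr _ => p i
      | Sum.inr (Sum.inr (Sum.inr _)), Sum.inl j => -(q j)
      | Sum.inr (Sum.inr (Sum.inr _)), Sum.inr _ => ⊥)
    (hB : B = fun i j =>
      match i, j with
      | Sum.inl i, Sum.inl j => V i j
      | Sum.inl i, Sum.inr _ => d i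
      | Sum.inr (Sum.inl i), Sum.inl j => if i = j then (lam : EReal) else ⊥
      | Sum.inr (Sum.inl _), Sum.inr _ => ⊥
      | Sum.inr (Sum.inr (Sum.inl i)), Sum.inl j => if i = j then (lam : EReal) else ⊥
      | Sum.inr (Sum.inr (Sum.inl _)), Sum.inr _ => ⊥
      | Sum.inr (Sum.inr (Sum.inr _)), Sum.inl _ => ⊥
      | Sum.inr (Sum.inr (Sum.inr _)), Sum.inr _ => (lam : EReal)) :
    (∃ x : Fin n → ℝ,
        (∀ i, (⨆ j, C i j + (x j : EReal)) ≤ (lam : EReal) + (x i : EReal)) ∧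
        (∀ i, p i ≤ (lam : EReal) + (x i : EReal)) ∧
        (∀ i, q i ≠ ⊤ → (x i : EReal) ≤ (lam : EReal) + q i) ∧
        (∀ i, ((⨆ j, U i j + (x j : EReal)) ⊔ b i) ≤
              ((⨆ j, V i j + (x j : EReal)) ⊔ d i))) ↔
    (∃ z : (Fin n ⊕ Unit) → ℝ,
        ∀ i, (⨆ j, A i j + (z j : EReal)) ≤ ⨆ j, B i j + (z j : EReal)) := by
  subst hA hB
  constructor
  · rintro ⟨x, h1, h2, h3, h4⟩
    refine ⟨Sum.elim x (fun _ => 0), ?_⟩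
    rintro (i | i | i | _) <;>
      simp only [iSup_sum, iSup_unique, Sum.elim_inl, Sum.elim_inr]
    · simpa using h4 i
    · rw [ereal_iSup_ite]
      simpa using h1 i
    · rw [ereal_iSup_ite]
      simpa using h2 i
    · simp only [EReal.bot_add, iSup_bot, EReal.coe_zero, add_zero, sup_bot_eq, bot_sup_eq]
      refine iSup_le fun j => ?_
      by_cases hqt : q j = ⊤
      · simp [hqt]
      · obtain ⟨r, hr⟩ : ∃ r : ℝ, q j = r := by
          lift q j to ℝ using ⟨hqt, hq j⟩ with r
          exact ⟨r, rfl⟩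
        have h := h3 j hqt
        rw [hr] at h ⊢
        rw [← EReal.coe_neg]
        norm_cast at h ⊢
        linarith
  · rintro ⟨z, hz⟩
    set t := z (Sum.inr ()) with ht
    have hzU : ∀ i, ((⨆ j, U i j + (z (Sum.inl j) : EReal)) ⊔ (b i + (t : EReal))) ≤
        ((⨆ j, V i j + (z (Sum.inl j) : EReal)) ⊔ (d i + (t : EReal))) := by
      intro i
      have := hz (Sum.inl i)
      simpa only [iSup_sum, iSup_unique] using this
    have hzC : ∀ i, (⨆ j, C i j + (z (Sum.inl j) : EReal)) ≤ (lam : EReal) + (z (Sum.inl i) : EReal) := by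
      intro i
      have := hz (Sum.inr (Sum.inl i))
      simp only [iSup_sum, iSup_unique, EReal.bot_add, iSup_bot, sup_bot_eq, bot_sup_eq] at this
      rwa [ereal_iSup_ite i lam (fun j => z (Sum.inl j))] at this
    have hzp : ∀ i, p i + (t : EReal) ≤ (lam : EReal) + (z (Sum.inl i) : EReal) := by
      intro i
      have := hz (Sum.inr (Sum.inr (Sum.inl i)))
      simp only [iSup_sum, iSup_unique, EReal.bot_add, iSup_bot, sup_bot_eq, bot_sup_eq] at this
      rwa [ereal_iSup_ite i lam (fun j => z (Sum.inl j))] at this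
    have hzq : ∀ j, -(q j) + (z (Sum.inl j) : EReal) ≤ (lam : EReal) + (t : EReal) := by
      intro j
      have := hz (Sum.inr (Sum.inr (Sum.inr ())))
      simp only [iSup_sum, iSup_unique, EReal.bot_add, iSup_bot, sup_bot_eq, bot_sup_eq] at this
      exact le_trans (le_iSup (fun j => -(q j) + (z (Sum.inl j) : EReal)) j) this
    refine ⟨fun j => z (Sum.inl j) - t, ?_, ?_, ?_, ?_⟩
    · intro i
      refine iSup_le fun j => ?_
      rw [← (EReal.addLECancellable_coe t).add_le_add_iff_right, ereal_addsub, ereal_addsub]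
      exact le_trans (le_iSup (fun j => C i j + (z (Sum.inl j) : EReal)) j) (hzC i)
    · intro i
      rw [← (EReal.addLECancellable_coe t).add_le_add_iff_right, ereal_addsub]
      exact hzp i
    · intro i hqt
      obtain ⟨r, hr⟩ : ∃ r : ℝ, q i = r := by
        lift q i to ℝ using ⟨hqt, hq i⟩ with r
        exact ⟨r, rfl⟩
      have h := hzq i
      show ((z (Sum.inl i) - t : ℝ) : EReal) ≤ (lam : EReal) + q i
      rw [hr] at h ⊢
      rw [← EReal.coe_neg] at h
      norm_cast at h ⊢
      linarith
    · intro i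
      rw [← (EReal.addLECancellable_coe t).add_le_add_iff_right, ereal_sup_addr, ereal_sup_addr,
        ereal_iSup_addr, ereal_iSup_addr]
      simp only [ereal_addsub]
      exact hzU i
end
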